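/- arXiv:1302.5568 — 4 statements merged into one kernel-verified Lean document; each statement's English description precedes it below -/
import Mathlib

section
/- Let u : ℝ^N → ℝ be locally bounded and upper semicontinuous, and suppose u satisfies Du·γ ≤ g in (closure Ω)^c in the viscosity sense. Then for every y ∉ closure(Ω) and every t with 0 < t ≤ τ_y, one has u(y) ≤ ∫₀ᵗ g(X_y(s)) ds + u(X_y(t)). -/
open MeasureTheory Filter Set Metric InnerProductSpace
open scoped Topology RealInnerProductSpace

noncomputable section

/-- `ℝ^N` as a Euclidean space. -/
abbrev EN (N : ℕ) := EuclideanSpace ℝ (Fin N)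

lemma usc_exists_max {α : Type*} [TopologicalSpace α] {f : α → ℝ}
    (hf : UpperSemicontinuous f) {K : Set α} (hK : IsCompact K) (hne : K.Nonempty) :
    ∃ x ∈ K, ∀ z ∈ K, f z ≤ f x := by
  have hopen : ∀ c : ℝ, IsOpen (f ⁻¹' Iio c) := fun c =>
    upperSemicontinuous_iff_isOpen_preimage.1 hf c
  have hbdd : BddAbove (f '' K) := by
    obtain ⟨s, hs⟩ := hK.elim_finite_subcover (fun n : ℕ => f ⁻¹' Iio n)
      (fun n => hopen n) (fun x hx => by
        obtain ⟨n, hn⟩ := exists_nat_gt (f x)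
        exact mem_iUnion.2 ⟨n, hn⟩)
    refine ⟨(s.sup id : ℕ), ?_⟩
    rintro v ⟨x, hxK, rfl⟩
    obtain ⟨n, hns, hxn⟩ := mem_iUnion₂.1 (hs hxK)
    calc f x ≤ n := le_of_lt hxn
    _ ≤ (s.sup id : ℕ) := by exact_mod_cast Nat.cast_le.2 (Finset.le_sup (f := id) hns)
  set M := sSup (f '' K) with hM
  by_contra hcon
  push_neg at hcon
  have hlt : ∀ x ∈ K, f x < M := by
    intro x hx
    obtain ⟨z, hzK, hz⟩ := hcon x hx
    exact lt_of_lt_of_le hz (le_csSup hbdd ⟨z, hzK, rfl⟩)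
  obtain ⟨s, hs⟩ := hK.elim_finite_subcover (fun n : ℕ => f ⁻¹' Iio (M - 1/(n+1)))
    (fun n => hopen _) (fun x hx => by
      obtain ⟨n, hn⟩ := exists_nat_one_div_lt (sub_pos.2 (hlt x hx))
      exact mem_iUnion.2 ⟨n, by simp only [mem_preimage, mem_Iio]; linarith⟩)
  set n₀ := s.sup id with hn₀
  have hbound : ∀ x ∈ K, f x ≤ M - 1/(n₀+1) := by
    intro x hx
    obtain ⟨n, hns, hxn⟩ := mem_iUnion₂.1 (hs hx)
    have h1 : (1:ℝ)/(n₀+1) ≤ 1/(n+1) := by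
      apply one_div_le_one_div_of_le (by positivity)
      have : (n:ℝ) ≤ n₀ := by exact_mod_cast Finset.le_sup (f := id) hns
      linarith
    have : f x < M - 1/(n+1) := hxn
    linarith
  have hMle : M ≤ M - 1/(n₀+1) :=
    csSup_le (hne.image f) (by rintro v ⟨x, hxK, rfl⟩; exact hbound x hxK)
  have : (0:ℝ) < 1/(n₀+1) := by positivity
  linarith

lemma usc_add_cont {α : Type*} [TopologicalSpace α] {f c : α → ℝ}
    (hf : UpperSemicontinuous f) (hc : Continuous c) :
    UpperSemicontinuous fun x => f x + c x := by
  intro x yv hy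
  simp only at hy
  have h1 : f x < f x + (yv - (f x + c x)) / 2 := by linarith
  have h2 : c x < c x + (yv - (f x + c x)) / 2 := by linarith
  filter_upwards [hf x _ h1, hc.upperSemicontinuous x _ h2] with z hz1 hz2
  linarith

lemma gradient_quad {E : Type*} [NormedAddCommGroup E] [InnerProductSpace ℝ E]
    [CompleteSpace E] (c : ℝ) (a x : E) :
    HasGradientAt (fun z => ‖z - a‖^2 / c) ((2/c) • (x - a)) x := by
  rw [hasGradientAt_iff_hasFDerivAt]
  have h1 : HasFDerivAt (fun z : E => ‖z - a‖^2)
      (2 • (innerSL ℝ (x - a)).comp (ContinuousLinearMap.id ℝ E)) x := by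
    simpa using ((hasFDerivAt_id x).sub_const a).norm_sq
  have h2 : HasFDerivAt (fun z : E => ‖z - a‖^2 / c)
      (c⁻¹ • (2 • (innerSL ℝ (x - a)).comp (ContinuousLinearMap.id ℝ E))) x := by
    refine (h1.const_mul c⁻¹).congr_of_eventuallyEq ?_
    filter_upwards with z
    simp only [div_eq_inv_mul]
  convert h2 using 1
  · rfl
  ext v
  simp [toDual_apply_apply, real_inner_smul_left]
  ring

set_option maxHeartbeats 1600000 in
lemma key {N : ℕ} (Ω : Set (EN N))
    (γ : EN N → EN N) (g : EN N → ℝ)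
    (Lγ Lg : NNReal) (hγlip : LipschitzWith Lγ γ) (hglip : LipschitzWith Lg g)
    (Cg : ℝ) (hgbd : ∀ x, |g x| ≤ Cg)
    (X : ℝ → EN N)
    (hXode : ∀ t, 0 ≤ t → HasDerivAt X (-(γ (X t))) t)
    (u : EN N → ℝ) (hu_usc : UpperSemicontinuous u)
    (hu_visc : ∀ φ : EN N → ℝ, ContDiff ℝ 2 φ →
      ∀ x ∉ closure Ω, IsLocalMax (fun z => u z - φ z) x →
        ⟪gradient φ x, γ x⟫ ≤ g x)
    (t : ℝ) (ht0 : 0 < t)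
    (htraj : ∀ s ∈ Icc (0:ℝ) t, X s ∉ closure Ω) :
    u (X 0) ≤ (∫ s in (0:ℝ)..t, g (X s)) + u (X t) := by
  have hXcont : ∀ s : ℝ, 0 ≤ s → ContinuousAt X s := fun s hs => (hXode s hs).continuousAt
  set Y : ℝ → EN N := fun s => X (max s 0) with hY
  have hYX : ∀ s : ℝ, 0 ≤ s → Y s = X s := by
    intro s hs; simp only [hY]; rw [max_eq_left hs]
  have hYcont : Continuous Y := by
    have h1 : Continuous (fun s : ℝ => max s 0) := continuous_id.max continuous_const
    rw [continuous_iff_continuousAt]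
    intro s
    have h2 : ContinuousAt X ((fun s : ℝ => max s 0) s) := hXcont _ (le_max_right s 0)
    show ContinuousAt (X ∘ fun s : ℝ => max s 0) s
    exact ContinuousAt.comp (g := X) (f := fun s : ℝ => max s 0)
      (hXcont (max s 0) (le_max_right s 0)) h1.continuousAt
  have hgc : Continuous g := hglip.continuous
  set f : ℝ → ℝ := fun r => g (Y r) with hf
  have hfc : Continuous f := hgc.comp hYcont
  set G : ℝ → ℝ := fun s => ∫ r in (0:ℝ)..s, f r with hG
  have hGderiv : ∀ b : ℝ, HasDerivAt G (f b) b := fun b =>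
    (hfc.integral_hasStrictDerivAt 0 b).hasDerivAt
  have hCg0 : (0:ℝ) ≤ Cg := le_trans (abs_nonneg _) (hgbd (X 0))
  have hGbd : ∀ s ∈ Icc (0:ℝ) t, |G s| ≤ Cg * t := by
    intro s hs
    have h1 : ‖∫ r in (0:ℝ)..s, f r‖ ≤ Cg * |s - 0| :=
      intervalIntegral.norm_integral_le_of_norm_le_const
        (fun x _ => by simpa using hgbd (Y x))
    rw [Real.norm_eq_abs] at h1
    calc |G s| ≤ Cg * |s - 0| := h1
    _ = Cg * s := by rw [sub_zero, abs_of_nonneg hs.1]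
    _ ≤ Cg * t := mul_le_mul_of_nonneg_left hs.2 hCg0
  have hInt : (∫ s in (0:ℝ)..t, g (X s)) = G t := by
    simp only [hG]
    apply intervalIntegral.integral_congr
    intro s hs
    rw [uIcc_of_le ht0.le] at hs
    simp only [hf]
    rw [hYX s hs.1]
  rw [hInt]
  by_contra hcon
  push_neg at hcon
  set δ := u (X 0) - G t - u (X t) with hδ
  have hδ0 : 0 < δ := by rw [hδ]; linarith
  set η := δ / (2 * t) with hη
  have hη0 : 0 < η := by rw [hη]; positivity
  have hηt : η * t = δ / 2 := by rw [hη]; field_simp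
  set traj := X '' Icc 0 t with htr
  have hXcOn : ContinuousOn X (Icc 0 t) := fun s hs => (hXcont s hs.1).continuousWithinAt
  have htrajc : IsCompact traj := isCompact_Icc.image_of_continuousOn hXcOn
  have htrajU : traj ⊆ (closure Ω)ᶜ := by rintro _ ⟨s, hs, rfl⟩; exact htraj s hs
  obtain ⟨r₀, hr₀, hthick⟩ := htrajc.exists_thickening_subset_open
    (isOpen_compl_iff.2 isClosed_closure) htrajU
  set K := Metric.cthickening 1 traj with hK
  have hKc : IsCompact K := htrajc.cthickening
  have htrajK : traj ⊆ K := Metric.self_subset_cthickening _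
  have hX0traj : X 0 ∈ traj := ⟨0, ⟨le_refl 0, ht0.le⟩, rfl⟩
  have hX0K : X 0 ∈ K := htrajK hX0traj
  obtain ⟨xU, hxUK, hUmax⟩ := usc_exists_max hu_usc hKc ⟨X 0, hX0K⟩
  set Umax := u xU with hUm
  obtain ⟨r₁, hr₁, husct⟩ : ∃ r > 0, ∀ z, dist z (X t) < r → u z < u (X t) + δ/2 := by
    have h1 := hu_usc (X t) (u (X t) + δ/2) (by linarith)
    rw [Metric.eventually_nhds_iff] at h1
    obtain ⟨r, hr, h2⟩ := h1
    exact ⟨r, hr, fun z hz => h2 hz⟩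
  set C₀ := Umax + Cg * t + η * t - u (X 0) with hC₀
  set R := min r₀ (min (1/2 : ℝ) r₁) with hR
  have hR0 : 0 < R := lt_min hr₀ (lt_min (by norm_num) hr₁)
  set ε₀ := R / (Real.sqrt C₀ + 1) with hε₀
  have hsq0 : (0:ℝ) ≤ Real.sqrt C₀ := Real.sqrt_nonneg _
  have hε₀0 : 0 < ε₀ := by rw [hε₀]; positivity
  have hsmall : Real.sqrt C₀ * ε₀ < R := by
    rw [hε₀, mul_div_assoc']
    rw [div_lt_iff₀ (by positivity)]
    nlinarith
  set Φ : ℝ → ℝ × EN N → ℝ :=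
    fun ε p => u p.2 + (G p.1 + η * p.1 - ‖p.2 - Y p.1‖^2 / ε^2) with hΦ
  set A : Set (ℝ × EN N) := Icc (0:ℝ) t ×ˢ K with hA
  have hAc : IsCompact A := isCompact_Icc.prod hKc
  have hAne : A.Nonempty := ⟨(0, X 0), ⟨⟨le_refl 0, ht0.le⟩, hX0K⟩⟩
  have hΦusc : ∀ ε : ℝ, UpperSemicontinuous (Φ ε) := by
    intro ε
    have h1 : UpperSemicontinuous (fun p : ℝ × EN N => u p.2) :=
      hu_usc.comp continuous_snd
    have hGcont : Continuous G := by
      rw [continuous_iff_continuousAt]; exact fun s => (hGderiv s).continuousAt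
    have h2 : Continuous (fun p : ℝ × EN N =>
        G p.1 + η * p.1 - ‖p.2 - Y p.1‖^2 / ε^2) := by
      apply Continuous.sub
      · exact (hGcont.comp continuous_fst).add (continuous_const.mul continuous_fst)
      · exact (((continuous_snd.sub (hYcont.comp continuous_fst)).norm.pow 2).div_const _)
    exact usc_add_cont h1 h2
  have exmax : ∀ ε : ℝ, ∃ p ∈ A, ∀ q ∈ A, Φ ε q ≤ Φ ε p :=
    fun ε => usc_exists_max (hΦusc ε) hAc hAne
  choose P hPA hPmax using exmax
  set sb : ℝ → ℝ := fun ε => (P ε).1 with hsbdef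
  set zb : ℝ → EN N := fun ε => (P ε).2 with hzbdef
  set dd : ℝ → ℝ := fun ε => ‖zb ε - Y (sb ε)‖ with hdd
  set m : ℝ → ℝ := fun ε => dd ε ^ 2 / ε ^ 2 with hm
  set M : ℝ → ℝ := fun ε => u (zb ε) + (G (sb ε) + η * sb ε - m ε) with hMdef
  have hPM : ∀ ε, Φ ε (P ε) = M ε := fun ε => rfl
  have hPmax' : ∀ ε : ℝ, ∀ q ∈ A, Φ ε q ≤ M ε := by
    intro ε q hq
    rw [← hPM ε]; exact hPmax ε q hq
  have hsb : ∀ ε, sb ε ∈ Icc (0:ℝ) t := fun ε => (hPA ε).1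
  have hzb : ∀ ε, zb ε ∈ K := fun ε => (hPA ε).2
  have hY0 : Y 0 = X 0 := hYX 0 le_rfl
  have hMl : ∀ ε, u (X 0) ≤ M ε := by
    intro ε
    have h := hPmax' ε (0, X 0) ⟨⟨le_refl 0, ht0.le⟩, hX0K⟩
    have hΦ0 : Φ ε (0, X 0) = u (X 0) := by
      simp [hΦ, hY0, hG, intervalIntegral.integral_same]
    rw [hΦ0] at h
    exact h
  have hm0 : ∀ ε, 0 ≤ m ε := by
    intro ε; rw [hm]; positivity
  have hmC : ∀ ε, m ε ≤ C₀ := by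
    intro ε
    have h1 : u (X 0) ≤ u (zb ε) + (G (sb ε) + η * sb ε - m ε) := hMl ε
    have h2 : u (zb ε) ≤ Umax := hUmax _ (hzb ε)
    have h3 : G (sb ε) ≤ Cg * t := (abs_le.1 (hGbd _ (hsb ε))).2
    have h4 : η * sb ε ≤ η * t := mul_le_mul_of_nonneg_left (hsb ε).2 hη0.le
    rw [hC₀]; linarith
  have hC₀0 : 0 ≤ C₀ := le_trans (hm0 1) (hmC 1)
  have hdd0 : ∀ ε, 0 ≤ dd ε := fun ε => norm_nonneg _
  have hdle : ∀ ε : ℝ, 0 < ε → dd ε ≤ Real.sqrt C₀ * ε := by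
    intro ε hε
    have h1 : dd ε ^ 2 ≤ C₀ * ε ^ 2 := by
      have h2 := hmC ε
      rw [hm] at h2
      simp only at h2
      rw [div_le_iff₀ (by positivity)] at h2
      linarith
    calc dd ε = Real.sqrt (dd ε ^ 2) := (Real.sqrt_sq (hdd0 ε)).symm
    _ ≤ Real.sqrt (C₀ * ε ^ 2) := Real.sqrt_le_sqrt h1
    _ = Real.sqrt C₀ * ε := by rw [Real.sqrt_mul hC₀0, Real.sqrt_sq hε.le]
  have hMmono : ∀ ε ε' : ℝ, 0 < ε → ε ≤ ε' → M ε ≤ M ε' := by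
    intro ε ε' hε hεε
    have h1 : Φ ε (P ε) ≤ Φ ε' (P ε) := by
      simp only [hΦ]
      have h2 : ‖(P ε).2 - Y (P ε).1‖^2 / ε'^2 ≤ ‖(P ε).2 - Y (P ε).1‖^2 / ε^2 :=
        div_le_div_of_nonneg_left (by positivity) (by positivity)
          (pow_le_pow_left₀ hε.le hεε 2)
      linarith
    rw [← hPM ε]
    exact le_trans h1 (hPmax' ε' (P ε) (hPA ε))
  have hdouble : ∀ ε : ℝ, 0 < ε → M ε + m ε / 2 ≤ M (Real.sqrt 2 * ε) := by
    intro ε hε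
    have h2 : (Real.sqrt 2 * ε)^2 = 2 * ε^2 := by
      rw [mul_pow, Real.sq_sqrt (by norm_num : (0:ℝ) ≤ 2)]
    have h1 : Φ (Real.sqrt 2 * ε) (P ε) = u (zb ε) + (G (sb ε) + η * sb ε - m ε / 2) := by
      show u (zb ε) + (G (sb ε) + η * sb ε - ‖zb ε - Y (sb ε)‖^2/(Real.sqrt 2 * ε)^2) = _
      rw [h2]
      have h3 : m ε = ‖zb ε - Y (sb ε)‖^2/ε^2 := rfl
      rw [h3]
      have hε2 : ε^2 ≠ 0 := by positivity
      field_simp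
    have h4 := hPmax' (Real.sqrt 2 * ε) (P ε) (hPA ε)
    rw [h1] at h4
    have h5 : M ε = u (zb ε) + (G (sb ε) + η * sb ε - m ε) := rfl
    rw [h5]
    linarith
  -- the main per-ε estimate
  have hkey : ∀ ε : ℝ, 0 < ε → ε ≤ ε₀ → η ≤ Lg * dd ε + 2 * Lγ * m ε := by
    intro ε hε hεε₀
    have hdR : dd ε < R :=
      lt_of_le_of_lt (le_trans (hdle ε hε)
        (mul_le_mul_of_nonneg_left hεε₀ hsq0)) hsmall
    have hd_r₀ : dd ε < r₀ := lt_of_lt_of_le hdR (min_le_left _ _)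
    have hd_half : dd ε < 1/2 :=
      lt_of_lt_of_le hdR (le_trans (min_le_right _ _) (min_le_left _ _))
    have hd_r₁ : dd ε < r₁ :=
      lt_of_lt_of_le hdR (le_trans (min_le_right _ _) (min_le_right _ _))
    have hs0 : 0 ≤ sb ε := (hsb ε).1
    have hst : sb ε ≤ t := (hsb ε).2
    have hYsb : Y (sb ε) = X (sb ε) := hYX _ hs0
    have hddn : dd ε = ‖zb ε - X (sb ε)‖ := by rw [hdd]; simp only; rw [hYsb]
    have hslt : sb ε < t := by
      rcases lt_or_eq_of_le hst with h | h
      · exact h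
      exfalso
      have h1 : u (X 0) ≤ u (zb ε) + (G (sb ε) + η * sb ε - m ε) := hMl ε
      rw [h] at h1
      have hdist : dist (zb ε) (X t) < r₁ := by
        have h3 : dist (zb ε) (X t) = dd ε := by
          rw [dist_eq_norm, hddn, h]
        rw [h3]; exact hd_r₁
      have h4 := husct _ hdist
      have h5 := hm0 ε
      linarith [h1, h4, hηt, h5, hδ]
    -- spatial viscosity inequality
    have hxtraj : X (sb ε) ∈ traj := ⟨sb ε, ⟨hs0, hst⟩, rfl⟩
    have hzΩ : zb ε ∉ closure Ω := by
      have h1 : zb ε ∈ Metric.thickening r₀ traj := by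
        rw [Metric.mem_thickening_iff]
        refine ⟨X (sb ε), hxtraj, ?_⟩
        rw [dist_eq_norm, ← hddn]
        exact hd_r₀
      intro hmem
      exact (hthick h1) hmem
    have hMexp : M ε = u (zb ε) + (G (sb ε) + η * sb ε - ‖zb ε - X (sb ε)‖^2/ε^2) := by
      have h5 : M ε = u (zb ε) + (G (sb ε) + η * sb ε - ‖zb ε - Y (sb ε)‖^2/ε^2) := rfl
      rw [h5, hYsb]
    have hloc : IsLocalMax (fun z => u z - ‖z - X (sb ε)‖^2/ε^2) (zb ε) := by
      have hball : Metric.ball (zb ε) (1/2) ∈ 𝓝 (zb ε) :=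
        Metric.ball_mem_nhds _ (by norm_num)
      filter_upwards [hball] with z hz
      have hzK : z ∈ K := by
        rw [hK]
        apply Metric.mem_cthickening_of_dist_le z (X (sb ε)) 1 traj hxtraj
        have h6 : dist (zb ε) (X (sb ε)) = dd ε := by rw [dist_eq_norm, hddn]
        calc dist z (X (sb ε)) ≤ dist z (zb ε) + dist (zb ε) (X (sb ε)) :=
              dist_triangle _ _ _
        _ ≤ 1/2 + 1/2 := by
            rw [h6]
            exact add_le_add (le_of_lt (mem_ball.1 hz)) hd_half.le
        _ ≤ 1 := by norm_num
      have h4 : u z + (G (sb ε) + η * sb ε - ‖z - Y (sb ε)‖^2/ε^2) ≤ M ε :=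
        hPmax' ε (sb ε, z) ⟨⟨hs0, hst⟩, hzK⟩
      rw [hYsb] at h4
      rw [hMexp] at h4
      show u z - ‖z - X (sb ε)‖^2/ε^2 ≤ u (zb ε) - ‖zb ε - X (sb ε)‖^2/ε^2
      linarith
    have hgrad := gradient_quad (ε^2) (X (sb ε)) (zb ε)
    have hcd : ContDiff ℝ 2 (fun z : EN N => ‖z - X (sb ε)‖^2/ε^2) := by
      apply ContDiff.div_const
      exact (contDiff_norm_sq ℝ).comp (contDiff_id.sub contDiff_const)
    have hvisc := hu_visc _ hcd (zb ε) hzΩ hloc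
    rw [hgrad.gradient] at hvisc
    rw [real_inner_smul_left] at hvisc
    -- time derivative inequality
    set ψ : ℝ → ℝ := fun s => G s + η * s - ‖zb ε - Y s‖^2/ε^2 with hψdef
    have hq : HasDerivWithinAt (fun s => ‖zb ε - Y s‖^2)
        (2 * ⟪zb ε - X (sb ε), γ (X (sb ε))⟫) (Ici (sb ε)) (sb ε) := by
      have hc : HasDerivAt (fun s => zb ε - X s) (γ (X (sb ε))) (sb ε) := by
        simpa using (hXode _ hs0).const_sub (zb ε)
      have hq1 : HasDerivAt (fun s => ‖zb ε - X s‖^2)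
          (2 * ⟪zb ε - X (sb ε), γ (X (sb ε))⟫) (sb ε) := by
        simpa using hc.norm_sq
      apply (hq1.hasDerivWithinAt).congr
      · intro s hs
        rw [hYX s (le_trans hs0 hs)]
      · rw [hYsb]
    have hψD : HasDerivWithinAt ψ
        (g (X (sb ε)) + η - (2 * ⟪zb ε - X (sb ε), γ (X (sb ε))⟫)/ε^2)
        (Ici (sb ε)) (sb ε) := by
      have hGd : HasDerivWithinAt G (g (X (sb ε))) (Ici (sb ε)) (sb ε) := by
        have h8 := (hGderiv (sb ε)).hasDerivWithinAt (s := Ici (sb ε))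
        have h9 : f (sb ε) = g (X (sb ε)) := by
          show g (Y (sb ε)) = g (X (sb ε))
          rw [hYsb]
        rwa [h9] at h8
      have hlin : HasDerivWithinAt (fun s : ℝ => η * s) η (Ici (sb ε)) (sb ε) := by
        simpa using ((hasDerivAt_id (sb ε)).const_mul η).hasDerivWithinAt
          (s := Ici (sb ε))
      exact (hGd.add hlin).sub (hq.div_const (ε^2))
    have hψle : g (X (sb ε)) + η - (2 * ⟪zb ε - X (sb ε), γ (X (sb ε))⟫)/ε^2 ≤ 0 := by
      have hslope := hasDerivWithinAt_iff_tendsto_slope.1 hψD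
      rw [Ici_sdiff_left] at hslope
      have hev : ∀ᶠ s in 𝓝[>] (sb ε), slope ψ (sb ε) s ≤ 0 := by
        have h5 : Iio t ∈ 𝓝 (sb ε) := Iio_mem_nhds hslt
        filter_upwards [mem_nhdsWithin_of_mem_nhds h5, self_mem_nhdsWithin]
          with s hst' hss
        have hss' : sb ε < s := hss
        have h6 : u (zb ε) + (G s + η * s - ‖zb ε - Y s‖^2/ε^2) ≤ M ε :=
          hPmax' ε (s, zb ε) ⟨⟨le_trans hs0 hss'.le, le_of_lt hst'⟩, hzb ε⟩
        have h7 : ψ s ≤ ψ (sb ε) := by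
          have h8 : M ε = u (zb ε) + ψ (sb ε) := by
            rw [hMexp, hψdef]
            simp only
            rw [hYsb]
          rw [h8] at h6
          show G s + η * s - ‖zb ε - Y s‖^2/ε^2 ≤ ψ (sb ε)
          linarith
        rw [slope_def_field]
        apply div_nonpos_of_nonpos_of_nonneg
        · linarith
        · linarith
      exact le_of_tendsto hslope hev
    -- combine
    have hεsq : (0:ℝ) < 2/ε^2 := by positivity
    have hA1 : g (X (sb ε)) + η ≤ 2/ε^2 * ⟪zb ε - X (sb ε), γ (X (sb ε))⟫ := by
      have heq : (2 * ⟪zb ε - X (sb ε), γ (X (sb ε))⟫)/ε^2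
          = 2/ε^2 * ⟪zb ε - X (sb ε), γ (X (sb ε))⟫ := by ring
      rw [heq] at hψle
      linarith
    have hA3 : ⟪zb ε - X (sb ε), γ (X (sb ε)) - γ (zb ε)⟫ ≤ dd ε * (Lγ * dd ε) := by
      calc ⟪zb ε - X (sb ε), γ (X (sb ε)) - γ (zb ε)⟫
          ≤ ‖zb ε - X (sb ε)‖ * ‖γ (X (sb ε)) - γ (zb ε)‖ := real_inner_le_norm _ _
      _ ≤ dd ε * (Lγ * dd ε) := by
          apply mul_le_mul
          · rw [hddn]
          · have h9 := hγlip.dist_le_mul (X (sb ε)) (zb ε)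
            rw [dist_eq_norm] at h9
            calc ‖γ (X (sb ε)) - γ (zb ε)‖ ≤ Lγ * dist (X (sb ε)) (zb ε) := by
                  rw [← dist_eq_norm]; exact hγlip.dist_le_mul _ _
            _ = Lγ * dd ε := by
                rw [dist_comm, dist_eq_norm, ← hddn]
          · exact norm_nonneg _
          · exact hdd0 ε
    have hA4 : g (zb ε) - g (X (sb ε)) ≤ Lg * dd ε := by
      have h9 := hglip.dist_le_mul (zb ε) (X (sb ε))
      rw [Real.dist_eq] at h9
      have h10 : dist (zb ε) (X (sb ε)) = dd ε := by rw [dist_eq_norm, hddn]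
      rw [h10] at h9
      calc g (zb ε) - g (X (sb ε)) ≤ |g (zb ε) - g (X (sb ε))| := le_abs_self _
      _ ≤ Lg * dd ε := h9
    have hB1 : 2/ε^2 * ⟪zb ε - X (sb ε), γ (X (sb ε)) - γ (zb ε)⟫
        ≤ 2/ε^2 * (dd ε * (Lγ * dd ε)) := mul_le_mul_of_nonneg_left hA3 hεsq.le
    have hB2 : 2/ε^2 * ⟪zb ε - X (sb ε), γ (X (sb ε)) - γ (zb ε)⟫
        = 2/ε^2 * ⟪zb ε - X (sb ε), γ (X (sb ε))⟫
          - 2/ε^2 * ⟪zb ε - X (sb ε), γ (zb ε)⟫ := by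
      rw [inner_sub_right]; ring
    have hmval : 2/ε^2 * (dd ε * (Lγ * dd ε)) = 2 * Lγ * m ε := by
      have h3 : m ε = dd ε^2/ε^2 := rfl
      rw [h3]
      have hε2 : ε^2 ≠ 0 := by positivity
      field_simp
    linarith [hA1, hvisc, hB1, hB2, hA4, hmval]
  -- concluding sequence argument
  have hsqrt2 : 1 < Real.sqrt 2 := by
    rw [show (1:ℝ) = Real.sqrt 1 from (Real.sqrt_one).symm]
    exact Real.sqrt_lt_sqrt (by norm_num) (by norm_num)
  set εk : ℕ → ℝ := fun k => ε₀ * (1/Real.sqrt 2)^k with hεk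
  have hsq2pos : (0:ℝ) < Real.sqrt 2 := by linarith
  have hεkpos : ∀ k, 0 < εk k := by
    intro k; rw [hεk]
    simp only
    positivity
  have hr1 : (1/Real.sqrt 2 : ℝ) < 1 := by
    rw [div_lt_one hsq2pos]; linarith
  have hr0 : (0:ℝ) ≤ 1/Real.sqrt 2 := by positivity
  have hεkle : ∀ k, εk k ≤ ε₀ := by
    intro k
    have h1 : (1/Real.sqrt 2 : ℝ)^k ≤ 1 := pow_le_one₀ hr0 hr1.le
    calc εk k = ε₀ * (1/Real.sqrt 2)^k := rfl
    _ ≤ ε₀ * 1 := mul_le_mul_of_nonneg_left h1 hε₀0.le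
    _ = ε₀ := mul_one _
  have hstep : ∀ k, Real.sqrt 2 * εk (k+1) = εk k := by
    intro k
    have h1 : εk (k+1) = ε₀ * (1/Real.sqrt 2)^(k+1) := rfl
    have h2 : εk k = ε₀ * (1/Real.sqrt 2)^k := rfl
    rw [h1, h2, pow_succ]
    have h3 : Real.sqrt 2 ≠ 0 := ne_of_gt hsq2pos
    field_simp
  set a : ℕ → ℝ := fun k => M (εk k) with ha
  have hanti : Antitone a := by
    apply antitone_nat_of_succ_le
    intro k
    apply hMmono _ _ (hεkpos _)
    rw [← hstep k]
    nlinarith [hεkpos (k+1), hsqrt2]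
  have hbdd : BddBelow (Set.range a) := ⟨u (X 0), by rintro _ ⟨k, rfl⟩; exact hMl _⟩
  have halim : Tendsto a atTop (𝓝 (⨅ k, a k)) := tendsto_atTop_ciInf hanti hbdd
  have hdiff : Tendsto (fun k => a k - a (k+1)) atTop (𝓝 0) := by
    have h2 : Tendsto (fun k => a (k+1)) atTop (𝓝 (⨅ k, a k)) :=
      halim.comp (tendsto_add_atTop_nat 1)
    simpa using halim.sub h2
  have hmk : Tendsto (fun k => m (εk (k+1))) atTop (𝓝 0) := by
    apply squeeze_zero (fun k => hm0 _) (fun k => ?_)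
      (by simpa using hdiff.const_mul 2)
    have h3 := hdouble (εk (k+1)) (hεkpos _)
    rw [hstep k] at h3
    have h4 : a (k+1) = M (εk (k+1)) := rfl
    have h5 : a k = M (εk k) := rfl
    calc m (εk (k+1)) = 2 * (m (εk (k+1))/2) := by ring
    _ ≤ 2 * (M (εk k) - M (εk (k+1))) := by linarith
    _ = 2 * (a k - a (k+1)) := by rw [h4, h5]
  have hdk : Tendsto (fun k => dd (εk (k+1))) atTop (𝓝 0) := by
    have hrk : Tendsto (fun k : ℕ => (1/Real.sqrt 2 : ℝ)^k) atTop (𝓝 0) :=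
      tendsto_pow_atTop_nhds_zero_of_lt_one hr0 hr1
    have hεk0 : Tendsto εk atTop (𝓝 0) := by
      have h6 := hrk.const_mul ε₀
      rw [mul_zero] at h6
      exact h6
    have h5 : Tendsto (fun k => Real.sqrt C₀ * εk (k+1)) atTop (𝓝 0) := by
      have h7 := (hεk0.comp (tendsto_add_atTop_nat 1)).const_mul (Real.sqrt C₀)
      rw [mul_zero] at h7
      exact h7
    exact squeeze_zero (fun k => hdd0 _) (fun k => hdle _ (hεkpos _)) h5
  have hfin : Tendsto (fun k => (Lg : ℝ) * dd (εk (k+1)) + 2 * Lγ * m (εk (k+1)))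
      atTop (𝓝 0) := by
    have h8 := (hdk.const_mul (Lg : ℝ)).add (hmk.const_mul (2 * (Lγ:ℝ)))
    simpa using h8
  have hη_le : η ≤ 0 :=
    ge_of_tendsto hfin (Filter.Eventually.of_forall
      (fun k => hkey _ (hεkpos _) (hεkle _)))
  linarith


/-- Lemma 2.1 (a).  Let `Ω ⊆ ℝ^N` be open, `γ, g` bounded Lipschitz,
`X y` the unique solution of `Ẋ = -γ(X)`, `X y 0 = y`, and
`τ y = inf {t > 0 : X y t ∈ closure Ω}`, assumed finite for `y ∉ closure Ω` (BC2).
If `u` is locally bounded, upper semicontinuous and satisfies `Du·γ ≤ g` in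
`(closure Ω)ᶜ` in the viscosity sense, then for every `y ∉ closure Ω` and every
`0 < t ≤ τ y` one has `u y ≤ ∫₀ᵗ g(X y s) ds + u (X y t)`. -/
theorem transport_subsolution
    {N : ℕ} (hN : 1 ≤ N)
    (Ω : Set (EN N)) (hΩ : IsOpen Ω)
    (γ : EN N → EN N) (g : EN N → ℝ)
    (Lγ Lg : NNReal) (hγlip : LipschitzWith Lγ γ) (hglip : LipschitzWith Lg g)
    (Cγ Cg : ℝ) (hγbd : ∀ x, ‖γ x‖ ≤ Cγ) (hgbd : ∀ x, |g x| ≤ Cg)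
    -- the flow of `-γ`
    (X : EN N → ℝ → EN N)
    (hX0 : ∀ y, X y 0 = y)
    (hXode : ∀ y t, 0 ≤ t → HasDerivAt (X y) (-(γ (X y t))) t)
    -- the hitting time of `closure Ω`
    (τ : EN N → ℝ)
    (hτ : ∀ y, τ y = sInf {t : ℝ | 0 < t ∧ X y t ∈ closure Ω})
    -- (BC2): the trajectory reaches `closure Ω` in finite time
    (hBC2 : ∀ y ∉ closure Ω, {t : ℝ | 0 < t ∧ X y t ∈ closure Ω}.Nonempty)
    -- `u` : locally bounded, usc, viscosity subsolution of `Du·γ ≤ g` in `(closure Ω)ᶜ`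
    (u : EN N → ℝ)
    (hu_locbdd : ∀ x : EN N, ∃ C : ℝ, ∀ᶠ y in 𝓝 x, |u y| ≤ C)
    (hu_usc : UpperSemicontinuous u)
    (hu_visc : ∀ φ : EN N → ℝ, ContDiff ℝ 2 φ →
      ∀ x ∉ closure Ω, IsLocalMax (fun z => u z - φ z) x →
        ⟪gradient φ x, γ x⟫ ≤ g x)
    (y : EN N) (hy : y ∉ closure Ω)
    (t : ℝ) (ht0 : 0 < t) (ht : t ≤ τ y) :
    u y ≤ (∫ s in (0:ℝ)..t, g (X y s)) + u (X y t) := by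
  have hτS : ∀ s : ℝ, 0 < s → s < τ y → X y s ∉ closure Ω := by
    intro s hs0 hsτ hmem
    have hbdd : BddBelow {t : ℝ | 0 < t ∧ X y t ∈ closure Ω} :=
      ⟨0, fun a ha => ha.1.le⟩
    have h1 : τ y ≤ s := by rw [hτ y]; exact csInf_le hbdd ⟨hs0, hmem⟩
    linarith
  have hkey : ∀ t' : ℝ, 0 < t' → t' < t →
      u y ≤ (∫ s in (0:ℝ)..t', g (X y s)) + u (X y t') := by
    intro t' ht'0 ht't
    have htraj : ∀ s ∈ Icc (0:ℝ) t', X y s ∉ closure Ω := by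
      intro s hs
      rcases eq_or_lt_of_le hs.1 with h | h
      · rw [← h, hX0 y]; exact hy
      · exact hτS s h (lt_of_le_of_lt hs.2 (lt_of_lt_of_le ht't ht))
    have h2 := key Ω γ g Lγ Lg hγlip hglip Cg hgbd (X y) (hXode y)
      u hu_usc hu_visc t' ht'0 htraj
    rwa [hX0 y] at h2
  -- pass to the limit t' → t⁻
  have hXcont : ∀ s : ℝ, 0 ≤ s → ContinuousAt (X y) s :=
    fun s hs => (hXode y s hs).continuousAt
  set Y : ℝ → EN N := fun s => X y (max s 0) with hY
  have hYX : ∀ s : ℝ, 0 ≤ s → Y s = X y s := by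
    intro s hs; simp only [hY]; rw [max_eq_left hs]
  have hYcont : Continuous Y := by
    have h1 : Continuous (fun s : ℝ => max s 0) := continuous_id.max continuous_const
    rw [continuous_iff_continuousAt]
    intro s
    show ContinuousAt (X y ∘ fun s : ℝ => max s 0) s
    exact ContinuousAt.comp (g := X y) (f := fun s : ℝ => max s 0)
      (hXcont (max s 0) (le_max_right s 0)) h1.continuousAt
  set f : ℝ → ℝ := fun r => g (Y r) with hf
  have hfc : Continuous f := hglip.continuous.comp hYcont
  set G : ℝ → ℝ := fun s => ∫ r in (0:ℝ)..s, f r with hG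
  have hGderiv : ∀ b : ℝ, HasDerivAt G (f b) b := fun b =>
    (hfc.integral_hasStrictDerivAt 0 b).hasDerivAt
  have hInt : ∀ s : ℝ, 0 ≤ s → (∫ r in (0:ℝ)..s, g (X y r)) = G s := by
    intro s hs
    simp only [hG]
    apply intervalIntegral.integral_congr
    intro r hr
    rw [uIcc_of_le hs] at hr
    simp only [hf]
    rw [hYX r hr.1]
  rw [hInt t ht0.le]
  apply le_of_forall_pos_le_add
  intro ε hε
  have ev1 : ∀ᶠ t' in 𝓝[<] t, u (X y t') < u (X y t) + ε/2 := by
    have h1 := hu_usc (X y t) (u (X y t) + ε/2) (by linarith)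
    have h2 := (hXcont t ht0.le).tendsto.eventually h1
    exact h2.filter_mono nhdsWithin_le_nhds
  have ev2 : ∀ᶠ t' in 𝓝[<] t, |G t' - G t| < ε/2 := by
    have h1 : ContinuousAt G t := (hGderiv t).continuousAt
    have h2 := h1.tendsto.eventually (eventually_abs_sub_lt (G t) (by linarith : (0:ℝ) < ε/2))
    exact h2.filter_mono nhdsWithin_le_nhds
  have ev3 : ∀ᶠ t' in 𝓝[<] t, 0 < t' :=
    mem_nhdsWithin_of_mem_nhds (Ioi_mem_nhds ht0)
  have ev4 : ∀ᶠ t' in 𝓝[<] t, t' < t := self_mem_nhdsWithin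
  obtain ⟨t', h1, h2, h3, h4⟩ := (ev1.and (ev2.and (ev3.and ev4))).exists
  have h5 := hkey t' h3 h4
  rw [hInt t' h3.le] at h5
  have h6 := abs_lt.1 h2
  linarith [h5, h1, h6.1, h6.2]
end
end

section
/- Let v : ℝ^N → ℝ be locally bounded and lower semicontinuous, and suppose v satisfies Dv·γ ≥ g in (closure Ω)^c in the viscosity sense. Then for every y ∉ closure(Ω) and every t with 0 < t ≤ τ_y, one has v(y) ≥ ∫₀ᵗ g(X_y(s)) ds + v(X_y(t)). -/
open MeasureTheory Filter Set Metric
open scoped Topology RealInnerProductSpace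

noncomputable section

/-- A lower semicontinuous function attains its minimum on a nonempty compact set. -/
lemma lsc_exists_min {α : Type*} [TopologicalSpace α] {f : α → ℝ}
    (hf : LowerSemicontinuous f) {s : Set α} (hs : IsCompact s) (hne : s.Nonempty) :
    ∃ a ∈ s, ∀ b ∈ s, f a ≤ f b := by
  by_contra hcon
  push_neg at hcon
  choose b hbmem hblt using hcon
  obtain ⟨F, hF⟩ := hs.elim_nhds_subcover' (fun a ha => {x | f (b a ha) < f x})
    (fun a ha => hf a _ (hblt a ha))
  have hFne : F.Nonempty := by
    obtain ⟨x, hx⟩ := hne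
    have := hF hx
    simp only [Set.mem_iUnion] at this
    obtain ⟨i, hiF, -⟩ := this
    exact ⟨i, hiF⟩
  obtain ⟨i₀, hi₀F, hi₀min⟩ := F.exists_min_image (fun i => f (b i.1 i.2)) hFne
  have hb₀ : b i₀.1 i₀.2 ∈ s := hbmem _ _
  have := hF hb₀
  simp only [Set.mem_iUnion] at this
  obtain ⟨i, hiF, hilt⟩ := this
  exact absurd (hi₀min i hiF) (not_le.2 hilt)

/-- A locally bounded function is bounded on compact sets. -/
lemma bdd_on_compact {α : Type*} [TopologicalSpace α] {f : α → ℝ}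
    (hloc : ∀ x : α, ∃ C : ℝ, ∀ᶠ y in 𝓝 x, |f y| ≤ C) {K : Set α} (hK : IsCompact K) :
    ∃ C, ∀ x ∈ K, |f x| ≤ C := by
  choose C hC using hloc
  obtain ⟨F, hF⟩ := hK.elim_nhds_subcover' (fun a _ => {x | |f x| ≤ C a}) (fun a _ => hC a)
  obtain ⟨M, hM⟩ := (F.image (fun i => C i.1)).exists_le
  refine ⟨M, fun x hx => ?_⟩
  have := hF hx
  simp only [Set.mem_iUnion] at this
  obtain ⟨i, hiF, hile⟩ := this
  exact le_trans hile (hM _ (Finset.mem_image_of_mem _ hiF))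



set_option maxHeartbeats 2000000 in
lemma aux_step {N : ℕ} (S : Set (EN N)) (hS : IsClosed S)
    (γ : EN N → EN N) (g : EN N → ℝ)
    (Lγ Lg : NNReal) (hγlip : LipschitzWith Lγ γ) (hglip : LipschitzWith Lg g)
    (Cg : ℝ) (hgbd : ∀ x, |g x| ≤ Cg)
    (X : ℝ → EN N)
    (hXode : ∀ u : ℝ, 0 ≤ u → HasDerivAt X (-(γ (X u))) u)
    (v : EN N → ℝ)
    (hv_locbdd : ∀ x : EN N, ∃ C : ℝ, ∀ᶠ y in 𝓝 x, |v y| ≤ C)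
    (hv_lsc : LowerSemicontinuous v)
    (hv_visc : ∀ φ : EN N → ℝ, ContDiff ℝ 2 φ →
      ∀ x ∉ S, IsLocalMin (fun z => v z - φ z) x →
        g x ≤ ⟪gradient φ x, γ x⟫)
    (t : ℝ) (ht0 : 0 < t) (hout : ∀ r ∈ Icc (0:ℝ) t, X r ∉ S) :
    (∫ s in (0:ℝ)..t, g (X s)) + v (X t) ≤ v (X 0) := by
  -- the reversed trajectory
  set W : ℝ → EN N := fun s => X (max (t - s) 0) with hWdef
  have hWX : ∀ {s : ℝ}, s ≤ t → W s = X (t - s) := by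
    intro s hs
    simp only [hWdef, max_eq_left (sub_nonneg.2 hs)]
  have hWcont : Continuous W := by
    rw [continuous_iff_continuousAt]
    intro s
    exact ContinuousAt.comp ((hXode _ (le_max_right _ _)).continuousAt)
      (((continuous_const.sub continuous_id).max continuous_const).continuousAt)
  have hW0 : W 0 = X t := by rw [hWX (le_of_lt ht0), sub_zero]
  have hWt : W t = X 0 := by rw [hWX (le_refl t), sub_self]
  -- derivative of W within `Iic t`
  have hW' : ∀ s₀ ∈ Icc (0:ℝ) t, HasDerivWithinAt W (γ (W s₀)) (Icc 0 t) s₀ := by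
    intro s₀ hs₀
    have h1 : HasDerivAt (fun s : ℝ => X (t - s)) (γ (X (t - s₀))) s₀ := by
      have h2 := (hXode (t - s₀) (by linarith [hs₀.2])).scomp s₀
        ((hasDerivAt_id s₀).const_sub t)
      simp at h2
      exact h2
    have h3 : HasDerivWithinAt (fun s : ℝ => X (t - s)) (γ (X (t - s₀))) (Icc 0 t) s₀ :=
      h1.hasDerivWithinAt
    have h4 := h3.congr (fun u hu => hWX hu.2) (hWX hs₀.2)
    rwa [← hWX hs₀.2] at h4
  -- the primitive G
  have hgWcont : Continuous fun r => g (W r) := hglip.continuous.comp hWcont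
  set G : ℝ → ℝ := fun s => ∫ r in (0:ℝ)..s, g (W r) with hGdef
  have hG' : ∀ s : ℝ, HasDerivAt G (g (W s)) s := by
    intro s
    exact intervalIntegral.integral_hasDerivAt_right (hgWcont.intervalIntegrable _ _)
      (hgWcont.stronglyMeasurableAtFilter _ _) hgWcont.continuousAt
  have hGcont : Continuous G := continuous_iff_continuousAt.2 fun s => (hG' s).continuousAt
  have hG0 : G 0 = 0 := intervalIntegral.integral_same
  have hCg0 : 0 ≤ Cg := le_trans (abs_nonneg _) (hgbd (X 0))
  have hGbd : ∀ s ∈ Icc (0:ℝ) t, |G s| ≤ Cg * t := by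
    intro s hs
    have h1 : ‖∫ r in (0:ℝ)..s, g (W r)‖ ≤ Cg * |s - 0| :=
      intervalIntegral.norm_integral_le_of_norm_le_const
        (fun x _ => by simpa using hgbd (W x))
    rw [Real.norm_eq_abs] at h1
    calc |G s| ≤ Cg * |s - 0| := h1
      _ ≤ Cg * t := by
          rw [sub_zero, abs_of_nonneg hs.1]
          exact mul_le_mul_of_nonneg_left hs.2 hCg0
  have hGt : G t = ∫ s in (0:ℝ)..t, g (X s) := by
    have h1 : G t = ∫ r in (0:ℝ)..t, g (X (t - r)) := by
      refine intervalIntegral.integral_congr ?_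
      intro r hr
      rw [uIcc_of_le ht0.le] at hr
      show g (W r) = g (X (t - r))
      rw [hWX hr.2]
    rw [h1]
    have h2 := intervalIntegral.integral_comp_sub_left (a := (0:ℝ)) (b := t)
      (fun u => g (X u)) t
    simpa using h2
  -- compact ball containing the trajectory
  obtain ⟨r₀, hr₀⟩ := ((isCompact_Icc.image hWcont)).isBounded.subset_closedBall 0
  have hWmem : ∀ s ∈ Icc (0:ℝ) t, ‖W s‖ ≤ r₀ := by
    intro s hs
    have := hr₀ (mem_image_of_mem W hs)
    simpa [dist_eq_norm] using this
  have hr₀0 : 0 ≤ r₀ := le_trans (norm_nonneg _) (hWmem 0 ⟨le_refl 0, ht0.le⟩)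
  set R : ℝ := r₀ + 2 with hRdef
  set K : Set (EN N) := closedBall (0 : EN N) R with hKdef
  have hKco : IsCompact K := isCompact_closedBall _ _
  have hWK : ∀ s ∈ Icc (0:ℝ) t, W s ∈ K := by
    intro s hs
    simp only [hKdef, mem_closedBall, dist_eq_norm, sub_zero]
    have := hWmem s hs
    linarith
  -- W avoids S
  have hWout : ∀ s ∈ Icc (0:ℝ) t, W s ∉ S := by
    intro s hs
    rw [hWX hs.2]
    exact hout _ ⟨by linarith [hs.2], by linarith [hs.1]⟩
  -- uniform separation between the trajectory and S
  obtain ⟨d₀, hd₀pos, hd₀⟩ :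
      ∃ d₀ > (0:ℝ), ∀ s' ∈ Icc (0:ℝ) t, ∀ z ∈ S, d₀ ≤ dist z (W s') := by
    rcases S.eq_empty_or_nonempty with hSe | hSne
    · exact ⟨1, one_pos, by simp [hSe]⟩
    · have hcont : ContinuousOn (fun s' => infDist (W s') S) (Icc 0 t) :=
        ((continuous_infDist_pt S).comp hWcont).continuousOn
      obtain ⟨sm, hsmmem, hsmmin⟩ :=
        isCompact_Icc.exists_isMinOn ⟨0, ⟨le_refl 0, ht0.le⟩⟩ hcont
      refine ⟨infDist (W sm) S, ?_, ?_⟩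
      · exact (hS.notMem_iff_infDist_pos hSne).1 (hWout sm hsmmem)
      · intro s' hs' z hz
        calc infDist (W sm) S ≤ infDist (W s') S := hsmmin hs'
          _ ≤ dist (W s') z := infDist_le_dist_of_mem hz
          _ = dist z (W s') := dist_comm _ _
  -- v is bounded on K
  obtain ⟨Cv, hCv⟩ := bdd_on_compact hv_locbdd hKco
  -- reduce to an ε-perturbed inequality
  suffices key : ∀ ε : ℝ, 0 < ε → (∫ s in (0:ℝ)..t, g (X s)) + v (X t) ≤ v (X 0) + ε * t by
    by_contra hcon
    push_neg at hcon
    set D : ℝ := (∫ s in (0:ℝ)..t, g (X s)) + v (X t) - v (X 0) with hDdef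
    have hD : 0 < D := by simp only [hDdef]; linarith
    have hεt : (D / (2 * t)) * t = D / 2 := by field_simp
    have := key (D / (2 * t)) (div_pos hD (by linarith))
    rw [hεt] at this
    simp only [hDdef] at this
    linarith
  intro ε hε
  -- the penalised functionals
  set c : ℕ → ℝ := fun n => (2:ℝ)^n with hcdef
  have hc_pos : ∀ n, (0:ℝ) < c n := fun n => pow_pos (by norm_num) n
  have hc_one : ∀ n, (1:ℝ) ≤ c n := fun n => one_le_pow₀ (by norm_num)
  have hc_succ : ∀ n, c (n+1) = 2 * c n := fun n => by
    simp only [hcdef, pow_succ]; ring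
  set Φ : ℕ → ℝ × EN N → ℝ := fun n p =>
    v p.2 + (ε * p.1 - G p.1 + c n * ⟪p.2 - W p.1, p.2 - W p.1⟫) with hΦdef
  have hΦlsc : ∀ n, LowerSemicontinuous (Φ n) := by
    intro n
    have h1 : LowerSemicontinuous fun p : ℝ × EN N => v p.2 :=
      hv_lsc.comp continuous_snd
    have h2 : Continuous fun p : ℝ × EN N =>
        ε * p.1 - G p.1 + c n * ⟪p.2 - W p.1, p.2 - W p.1⟫ := by
      refine ((continuous_const.mul continuous_fst).sub
        (hGcont.comp continuous_fst)).add (continuous_const.mul ?_)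
      exact Continuous.inner (continuous_snd.sub (hWcont.comp continuous_fst))
        (continuous_snd.sub (hWcont.comp continuous_fst))
    exact h1.add h2.lowerSemicontinuous
  set Q : Set (ℝ × EN N) := Icc (0:ℝ) t ×ˢ K with hQdef
  have hQco : IsCompact Q := isCompact_Icc.prod hKco
  have htmem : t ∈ Icc (0:ℝ) t := ⟨ht0.le, le_refl t⟩
  have hQne : Q.Nonempty := ⟨(t, W t), ⟨htmem, hWK t htmem⟩⟩
  choose p hpQ hpmin using fun n => lsc_exists_min (hΦlsc n) hQco hQne
  set sn : ℕ → ℝ := fun n => (p n).1 with hsndef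
  set zn : ℕ → EN N := fun n => (p n).2 with hzndef
  set δ : ℕ → EN N := fun n => zn n - W (sn n) with hδdef
  set q : ℕ → ℝ := fun n => ⟪δ n, δ n⟫ with hqdef
  set m : ℕ → ℝ := fun n => Φ n (p n) with hmdef
  have hsn : ∀ n, sn n ∈ Icc (0:ℝ) t := fun n => (hpQ n).1
  have hzn : ∀ n, zn n ∈ K := fun n => (hpQ n).2
  have hq0 : ∀ n, 0 ≤ q n := fun n => real_inner_self_nonneg
  have hqnorm : ∀ n, q n = ‖δ n‖^2 := fun n => real_inner_self_eq_norm_sq _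
  have hm_eq : ∀ n, m n = v (zn n) + (ε * sn n - G (sn n) + c n * q n) := fun n => rfl
  -- upper bound for m
  have hm_ub : ∀ n, m n ≤ v (X 0) + ε * t - G t := by
    intro n
    have h1 := hpmin n (t, W t) ⟨htmem, hWK t htmem⟩
    have h2 : Φ n (t, W t) = v (X 0) + ε * t - G t := by
      simp only [hΦdef, sub_self, inner_zero_left, mul_zero, hWt]
      ring
    rw [hmdef]; rw [h2] at h1; linarith
  -- lower bound for m
  have hm_lb : ∀ n, -Cv - Cg * t ≤ m n := by
    intro n
    have h1 : -Cv ≤ v (zn n) := by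
      have := (abs_le.1 (hCv _ (hzn n))).1; linarith
    have h2 : G (sn n) ≤ Cg * t := (abs_le.1 (hGbd _ (hsn n))).2
    have h3 : 0 ≤ ε * sn n := mul_nonneg hε.le (hsn n).1
    have h4 : 0 ≤ c n * q n := mul_nonneg (hc_pos n).le (hq0 n)
    rw [hm_eq n]; linarith
  -- monotonicity of m
  have hm_succ : ∀ n, m n ≤ m (n+1) ∧ c (n+1) * q (n+1) ≤ 2 * (m (n+1) - m n) := by
    intro n
    have h1 : m n ≤ Φ n (p (n+1)) := hpmin n _ (hpQ (n+1))
    have h2 : Φ n (p (n+1)) = m (n+1) - c n * q (n+1) := by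
      rw [hmdef]
      simp only [hΦdef, hc_succ n]
      have : q (n+1) = ⟪(p (n+1)).2 - W ((p (n+1)).1), (p (n+1)).2 - W ((p (n+1)).1)⟫ := rfl
      rw [← this]
      ring
    have h3 : 0 ≤ q (n+1) := hq0 (n+1)
    have h4 : 0 ≤ c n := (hc_pos n).le
    constructor
    · nlinarith
    · rw [hc_succ n]; nlinarith
  have hm_mono : Monotone m := monotone_nat_of_le_succ fun n => (hm_succ n).1
  -- m converges, so consecutive differences tend to 0
  have hm_conv : ∃ L, Tendsto m atTop (𝓝 L) :=
    ⟨_, tendsto_atTop_ciSup hm_mono ⟨v (X 0) + ε * t - G t, by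
      rintro _ ⟨n, rfl⟩; exact hm_ub n⟩⟩
  obtain ⟨L, hL⟩ := hm_conv
  have hdiff : Tendsto (fun n => m (n+1) - m n) atTop (𝓝 0) := by
    have := (hL.comp (tendsto_add_atTop_nat 1)).sub hL
    simpa using this
  -- penalisation terms tend to zero
  have hpen0' : Tendsto (fun n => c n * q n) atTop (𝓝 0) := by
    rw [← Filter.tendsto_add_atTop_iff_nat 1]
    refine squeeze_zero (fun n => mul_nonneg (hc_pos _).le (hq0 _))
      (fun n => (hm_succ n).2) ?_
    simpa using hdiff.const_mul 2
  have hq_le : ∀ n, q n ≤ (2 * Cv) * ((1:ℝ)/2)^n := by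
    intro n
    have h1 := hpmin n (sn n, W (sn n)) ⟨hsn n, hWK _ (hsn n)⟩
    have h2 : Φ n (sn n, W (sn n)) =
        v (W (sn n)) + (ε * sn n - G (sn n)) := by
      simp only [hΦdef, sub_self, inner_zero_left, mul_zero]
      ring
    have h3 : Φ n (p n) = v (zn n) + (ε * sn n - G (sn n)) + c n * q n := by
      have h0 : Φ n (p n) = v (zn n) + (ε * sn n - G (sn n) + c n * q n) := hm_eq n
      rw [h0]; ring
    rw [h2] at h1
    rw [h3] at h1
    have h4 : c n * q n ≤ 2 * Cv := by
      have hv1 := (abs_le.1 (hCv _ (hzn n))).1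
      have hv2 := (abs_le.1 (hCv _ (hWK _ (hsn n)))).2
      linarith
    have h5 : ((1:ℝ)/2)^n * (c n) = 1 := by
      simp only [hcdef, div_pow, one_pow]
      rw [div_mul_eq_mul_div, one_mul, div_self (pow_pos (by norm_num : (0:ℝ) < 2) n).ne']
    calc q n = ((1:ℝ)/2)^n * (c n * q n) := by
          rw [← mul_assoc, h5, one_mul]
      _ ≤ ((1:ℝ)/2)^n * (2 * Cv) := by
          apply mul_le_mul_of_nonneg_left h4
          positivity
      _ = (2 * Cv) * ((1:ℝ)/2)^n := by ring
  have hq_to0 : Tendsto q atTop (𝓝 0) := by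
    refine squeeze_zero hq0 hq_le ?_
    have := (tendsto_pow_atTop_nhds_zero_of_lt_one (by norm_num : (0:ℝ) ≤ 1/2)
      (by norm_num : (1:ℝ)/2 < 1)).const_mul (2 * Cv)
    simpa using this
  have hδ_to0 : Tendsto (fun n => ‖δ n‖) atTop (𝓝 0) := by
    have h1 : (fun n => ‖δ n‖) = fun n => Real.sqrt (q n) := by
      funext n
      rw [hqnorm n, Real.sqrt_sq (norm_nonneg _)]
    rw [h1]
    have h2 : Tendsto Real.sqrt (𝓝 0) (𝓝 0) := by
      have h3 := Real.continuous_sqrt.continuousAt (x := (0:ℝ))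
      unfold ContinuousAt at h3
      simp only [Real.sqrt_zero] at h3
      exact h3
    exact h2.comp hq_to0
  -- Key step: for good n, the minimum is at time 0
  have hkey : ∀ n, 2 * (Lγ:ℝ) * (c n * q n) + (Lg:ℝ) * ‖δ n‖ < ε →
      ‖δ n‖ < d₀ → ‖δ n‖ < 1 → sn n = 0 := by
    intro n hsmall hd hone
    by_contra hs0
    have hs₀pos : 0 < sn n := lt_of_le_of_ne (hsn n).1 (Ne.symm hs0)
    have hdistzW : dist (zn n) (W (sn n)) = ‖δ n‖ := dist_eq_norm _ _
    -- (a) the minimising point is outside S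
    have hzS : zn n ∉ S := by
      intro hmem
      have := hd₀ (sn n) (hsn n) (zn n) hmem
      rw [hdistzW] at this
      linarith
    -- (b) K is a neighbourhood of the minimising point
    have hKnhds : K ∈ 𝓝 (zn n) := by
      have hzball : zn n ∈ ball (0 : EN N) R := by
        have h1 : ‖zn n‖ ≤ ‖W (sn n)‖ + ‖δ n‖ := by
          have : zn n = W (sn n) + δ n := by simp [hδdef]
          calc ‖zn n‖ = ‖W (sn n) + δ n‖ := by rw [← this]
            _ ≤ ‖W (sn n)‖ + ‖δ n‖ := norm_add_le _ _
        have h2 := hWmem (sn n) (hsn n)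
        simp only [mem_ball, dist_eq_norm, sub_zero, hRdef]
        linarith
      exact Filter.mem_of_superset (isOpen_ball.mem_nhds hzball) ball_subset_closedBall
    -- (c) minimality in the space variable
    have hzmin : ∀ z' ∈ K,
        v (zn n) + c n * ⟪zn n - W (sn n), zn n - W (sn n)⟫ ≤
          v z' + c n * ⟪z' - W (sn n), z' - W (sn n)⟫ := by
      intro z' hz'
      have h := hpmin n (sn n, z') ⟨hsn n, hz'⟩
      have e1 : Φ n (p n) = v (zn n) +
          (ε * sn n - G (sn n) + c n * ⟪zn n - W (sn n), zn n - W (sn n)⟫) := rfl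
      have e2 : Φ n (sn n, z') = v z' +
          (ε * sn n - G (sn n) + c n * ⟪z' - W (sn n), z' - W (sn n)⟫) := rfl
      rw [e1, e2] at h
      linarith
    -- the test function
    set φ : EN N → ℝ := fun z' => -(c n * ⟪z' - W (sn n), z' - W (sn n)⟫) with hφdef
    have hφC2 : ContDiff ℝ 2 φ :=
      (contDiff_const.mul (ContDiff.inner ℝ (contDiff_id.sub contDiff_const)
        (contDiff_id.sub contDiff_const))).neg
    have hlocmin : IsLocalMin (fun z' => v z' - φ z') (zn n) := by
      refine Filter.eventually_of_mem hKnhds fun z' hz' => ?_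
      simp only [hφdef, sub_neg_eq_add]
      exact hzmin z' hz'
    -- gradient evaluation
    have hgrad_eval : ⟪gradient φ (zn n), γ (zn n)⟫ =
        -(2 * c n * ⟪δ n, γ (zn n)⟫) := by
      have hid : HasFDerivAt (fun z' : EN N => z' - W (sn n))
          (ContinuousLinearMap.id ℝ (EN N)) (zn n) := (hasFDerivAt_id _).sub_const _
      have hin := HasFDerivAt.inner ℝ hid hid
      have hφF := (hin.const_mul (c n)).neg
      have e0 : ⟪gradient φ (zn n), γ (zn n)⟫ = (fderiv ℝ φ (zn n)) (γ (zn n)) :=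
        InnerProductSpace.toDual_symm_apply
      rw [e0, show fderiv ℝ φ (zn n) = _ from hφF.fderiv]
      simp only [ContinuousLinearMap.neg_apply, ContinuousLinearMap.coe_smul',
        Pi.smul_apply, ContinuousLinearMap.coe_comp', Function.comp_apply,
        ContinuousLinearMap.prod_apply, ContinuousLinearMap.coe_id', id_eq,
        fderivInnerCLM_apply, smul_eq_mul]
      have : ⟪γ (zn n), zn n - W (sn n)⟫ = ⟪δ n, γ (zn n)⟫ := real_inner_comm _ _
      rw [this]
      have h9 : ⟪zn n - W (sn n), γ (zn n)⟫ = ⟪δ n, γ (zn n)⟫ := rfl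
      rw [h9]; ring
    -- viscosity inequality
    have happ := hv_visc φ hφC2 (zn n) hzS hlocmin
    rw [hgrad_eval] at happ
    -- time-derivative inequality at the minimum
    set w : EN N := W (sn n) with hwdef
    set ψ : ℝ → ℝ := fun s => ε * s - G s + c n * ⟪zn n - W s, zn n - W s⟫ with hψdef
    have hψmin : ∀ s' ∈ Icc (0:ℝ) t, ψ (sn n) ≤ ψ s' := by
      intro s' hs'
      have h := hpmin n (s', zn n) ⟨hs', hzn n⟩
      have e1 : Φ n (p n) = v (zn n) + ψ (sn n) := rfl
      have e2 : Φ n (s', zn n) = v (zn n) + ψ s' := rfl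
      rw [e1, e2] at h
      linarith
    have hεd : HasDerivAt (fun s : ℝ => ε * s) ε (sn n) := by
      simpa using (hasDerivAt_id (sn n)).const_mul ε
    have hWd := hW' (sn n) (hsn n)
    have hFd : HasDerivWithinAt (fun s => zn n - W s) (-(γ w)) (Icc 0 t) (sn n) :=
      hWd.const_sub (zn n)
    have hq' : HasDerivWithinAt (fun s => ⟪zn n - W s, zn n - W s⟫)
        (⟪zn n - w, -(γ w)⟫ + ⟪-(γ w), zn n - w⟫) (Icc 0 t) (sn n) :=
      HasDerivWithinAt.inner ℝ hFd hFd
    set dψ : ℝ := ε - g w + c n * (⟪zn n - w, -(γ w)⟫ + ⟪-(γ w), zn n - w⟫) with hdψdef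
    have hψd : HasDerivWithinAt ψ dψ (Icc 0 t) (sn n) :=
      ((hεd.sub (hG' (sn n))).hasDerivWithinAt).add (hq'.const_mul (c n))
    -- one-sided first order condition
    have htan : (0:ℝ) - sn n ∈ posTangentConeAt (Icc (0:ℝ) t) (sn n) := by
      apply sub_mem_posTangentConeAt_of_segment_subset
      rw [segment_symm, segment_eq_Icc hs₀pos.le]
      exact Icc_subset_Icc_right (hsn n).2
    have hlocminOn : IsLocalMinOn ψ (Icc 0 t) (sn n) := by
      have h : IsMinOn ψ (Icc 0 t) (sn n) := isMinOn_iff.2 hψmin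
      exact h.filter_mono inf_le_right
    have hFnonneg := hlocminOn.hasFDerivWithinAt_nonneg hψd.hasFDerivWithinAt htan
    have hdψle : dψ ≤ 0 := by
      simp only [ContinuousLinearMap.toSpanSingleton_apply,
        smul_eq_mul] at hFnonneg
      nlinarith
    -- put everything together
    have hips : ⟪zn n - w, -(γ w)⟫ + ⟪-(γ w), zn n - w⟫ = -(2 * ⟪δ n, γ w⟫) := by
      have h1 : ⟪zn n - w, -(γ w)⟫ = -⟪δ n, γ w⟫ := by
        rw [inner_neg_right]
      have h2 : ⟪-(γ w), zn n - w⟫ = -⟪δ n, γ w⟫ := by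
        rw [inner_neg_left, real_inner_comm]
      rw [h1, h2]; ring
    rw [hips] at hdψdef
    have hsplit : ⟪δ n, γ (zn n)⟫ = ⟪δ n, γ (zn n) - γ w⟫ + ⟪δ n, γ w⟫ := by
      rw [inner_sub_right]; ring
    have hB : |⟪δ n, γ (zn n) - γ w⟫| ≤ (Lγ:ℝ) * ‖δ n‖^2 := by
      calc |⟪δ n, γ (zn n) - γ w⟫| ≤ ‖δ n‖ * ‖γ (zn n) - γ w‖ := abs_real_inner_le_norm _ _
        _ ≤ ‖δ n‖ * ((Lγ:ℝ) * ‖δ n‖) := by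
            apply mul_le_mul_of_nonneg_left _ (norm_nonneg _)
            have := hγlip.dist_le_mul (zn n) w
            rw [dist_eq_norm, dist_eq_norm] at this
            exact this
        _ = (Lγ:ℝ) * ‖δ n‖^2 := by ring
    have hg2 : |g w - g (zn n)| ≤ (Lg:ℝ) * ‖δ n‖ := by
      have := hglip.dist_le_mul w (zn n)
      rw [Real.dist_eq, dist_eq_norm] at this
      calc |g w - g (zn n)| ≤ (Lg:ℝ) * ‖w - zn n‖ := this
        _ = (Lg:ℝ) * ‖δ n‖ := by rw [norm_sub_rev]
    -- contradiction
    have hA : -(2 * (c n * ⟪δ n, γ w⟫)) ≤ g w - ε := by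
      rw [hdψdef] at hdψle; linarith
    have hBB : -(2 * c n * ⟪δ n, γ (zn n) - γ w⟫) ≤ 2 * (Lγ:ℝ) * (c n * ‖δ n‖^2) := by
      have h5 : -((Lγ:ℝ) * ‖δ n‖^2) ≤ ⟪δ n, γ (zn n) - γ w⟫ := (abs_le.1 hB).1
      nlinarith [(hc_pos n).le]
    have hfinal : ε ≤ 2 * (Lγ:ℝ) * (c n * q n) + (Lg:ℝ) * ‖δ n‖ := by
      rw [hsplit] at happ
      have e3 : -(2 * c n * (⟪δ n, γ (zn n) - γ w⟫ + ⟪δ n, γ w⟫)) =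
          (-(2 * c n * ⟪δ n, γ (zn n) - γ w⟫)) + (-(2 * (c n * ⟪δ n, γ w⟫))) := by ring
      rw [e3] at happ
      have hq'' : q n = ‖δ n‖^2 := hqnorm n
      rw [hq'']
      have h6 := (abs_le.1 hg2).2
      linarith
    linarith
  -- eventually the time-minimum is at 0
  have htends : Tendsto (fun n => 2 * (Lγ:ℝ) * (c n * q n) + (Lg:ℝ) * ‖δ n‖)
      atTop (𝓝 0) := by
    have h1 := hpen0'.const_mul (2 * (Lγ:ℝ))
    have h2 := hδ_to0.const_mul (Lg:ℝ)
    have := h1.add h2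
    simpa using this
  have hev1 : ∀ᶠ n in atTop, 2 * (Lγ:ℝ) * (c n * q n) + (Lg:ℝ) * ‖δ n‖ < ε :=
    htends.eventually_lt_const hε
  have hev2 : ∀ᶠ n in atTop, ‖δ n‖ < min d₀ 1 :=
    hδ_to0.eventually_lt_const (lt_min hd₀pos one_pos)
  have hev0 : ∀ᶠ n in atTop, sn n = 0 := by
    filter_upwards [hev1, hev2] with n h1 h2
    exact hkey n h1 (lt_min_iff.1 h2).1 (lt_min_iff.1 h2).2
  have hvz : ∀ᶠ n in atTop, v (zn n) ≤ v (X 0) + ε * t - G t := by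
    filter_upwards [hev0] with n hsn0
    have h0 : m n = v (zn n) + (ε * sn n - G (sn n) + c n * q n) := hm_eq n
    rw [hsn0] at h0
    rw [hG0] at h0
    have h4 : 0 ≤ c n * q n := mul_nonneg (hc_pos n).le (hq0 n)
    have h5 := hm_ub n
    rw [h0] at h5
    linarith
  have hdist : ∀ᶠ n in atTop, dist (zn n) (X t) = ‖δ n‖ := by
    filter_upwards [hev0] with n hsn0
    have hδn : δ n = zn n - X t := by
      show zn n - W (sn n) = zn n - X t
      rw [hsn0, hW0]
    rw [hδn]
    exact dist_eq_norm _ _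
  have htendz : Tendsto zn atTop (𝓝 (X t)) := by
    refine tendsto_iff_dist_tendsto_zero.2 ?_
    exact hδ_to0.congr' (hdist.mono fun n h => h.symm)
  have hle : v (X t) ≤ v (X 0) + ε * t - G t := by
    by_contra hlt
    push_neg at hlt
    have hlsc := hv_lsc (X t) _ hlt
    have hup := htendz.eventually hlsc
    obtain ⟨n, h1, h2⟩ := (hup.and hvz).exists
    linarith
  rw [← hGt]
  linarith


/-- Lemma 2.1 (b).  Let `Ω ⊆ ℝ^N` be open, `γ, g` bounded Lipschitz,
`X y` the unique solution of `Ẋ = -γ(X)`, `X y 0 = y`, and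
`τ y = inf {t > 0 : X y t ∈ closure Ω}`, assumed finite for `y ∉ closure Ω` (BC2).
If `v` is locally bounded, lower semicontinuous and satisfies `Dv·γ ≥ g` in
`(closure Ω)ᶜ` in the viscosity sense, then for every `y ∉ closure Ω` and every
`0 < t ≤ τ y` one has `v y ≥ ∫₀ᵗ g(X y s) ds + v (X y t)`. -/
theorem transport_supersolution
    {N : ℕ} (hN : 1 ≤ N)
    (Ω : Set (EN N)) (hΩ : IsOpen Ω)
    (γ : EN N → EN N) (g : EN N → ℝ)
    (Lγ Lg : NNReal) (hγlip : LipschitzWith Lγ γ) (hglip : LipschitzWith Lg g)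
    (Cγ Cg : ℝ) (hγbd : ∀ x, ‖γ x‖ ≤ Cγ) (hgbd : ∀ x, |g x| ≤ Cg)
    -- the flow of `-γ`
    (X : EN N → ℝ → EN N)
    (hX0 : ∀ y, X y 0 = y)
    (hXode : ∀ y t, 0 ≤ t → HasDerivAt (X y) (-(γ (X y t))) t)
    -- the hitting time of `closure Ω`
    (τ : EN N → ℝ)
    (hτ : ∀ y, τ y = sInf {t : ℝ | 0 < t ∧ X y t ∈ closure Ω})
    -- (BC2): the trajectory reaches `closure Ω` in finite time
    (hBC2 : ∀ y ∉ closure Ω, {t : ℝ | 0 < t ∧ X y t ∈ closure Ω}.Nonempty)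
    -- `v` : locally bounded, lsc, viscosity supersolution of `Dv·γ ≥ g` in `(closure Ω)ᶜ`
    (v : EN N → ℝ)
    (hv_locbdd : ∀ x : EN N, ∃ C : ℝ, ∀ᶠ y in 𝓝 x, |v y| ≤ C)
    (hv_lsc : LowerSemicontinuous v)
    (hv_visc : ∀ φ : EN N → ℝ, ContDiff ℝ 2 φ →
      ∀ x ∉ closure Ω, IsLocalMin (fun z => v z - φ z) x →
        g x ≤ ⟪gradient φ x, γ x⟫)
    (y : EN N) (hy : y ∉ closure Ω)
    (t : ℝ) (ht0 : 0 < t) (ht : t ≤ τ y) :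
    (∫ s in (0:ℝ)..t, g (X y s)) + v (X y t) ≤ v y := by
  -- the trajectory stays outside `closure Ω` strictly before time `t`
  have hXout : ∀ t' ∈ Ioo (0:ℝ) t, ∀ r ∈ Icc (0:ℝ) t', X y r ∉ closure Ω := by
    intro t' ht' r hr hmem
    rcases eq_or_lt_of_le hr.1 with h0 | hpos
    · rw [← h0, hX0] at hmem
      exact hy hmem
    · have hτle : τ y ≤ r := by
        rw [hτ]
        exact csInf_le ⟨0, fun x hx => hx.1.le⟩ ⟨hpos, hmem⟩
      linarith [hr.2, ht'.2]
  have haux : ∀ t' ∈ Ioo (0:ℝ) t, (∫ s in (0:ℝ)..t', g (X y s)) + v (X y t') ≤ v y := by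
    intro t' ht'
    have := aux_step (closure Ω) isClosed_closure γ g Lγ Lg hγlip hglip Cg hgbd (X y)
      (fun u hu => hXode y u hu) v hv_locbdd hv_lsc hv_visc t' ht'.1 (hXout t' ht')
    rwa [hX0] at this
  -- pass to the limit t' → t⁻
  suffices h : ∀ ε : ℝ, 0 < ε → (∫ s in (0:ℝ)..t, g (X y s)) + v (X y t) ≤ v y + ε by
    by_contra hc
    push_neg at hc
    have := h (((∫ s in (0:ℝ)..t, g (X y s)) + v (X y t) - v y) / 2) (by linarith)
    linarith
  intro ε hε
  have hXcont : ContinuousAt (X y) t := (hXode y t ht0.le).continuousAt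
  have hIcont : ContinuousOn (fun r => g (X y r)) (Icc 0 t) := fun r hr =>
    ((hglip.continuous.continuousAt).comp ((hXode y r hr.1).continuousAt)).continuousWithinAt
  have hCg0 : 0 ≤ Cg := le_trans (abs_nonneg _) (hgbd y)
  -- choose t' < t close to t
  have hev1 : ∀ᶠ u in 𝓝[<] t, v (X y t) - ε/2 < v (X y u) := by
    have h1 := hv_lsc (X y t) (v (X y t) - ε/2) (by linarith)
    exact (hXcont.eventually h1).filter_mono nhdsWithin_le_nhds
  have hev2 : ∀ᶠ u in 𝓝[<] t, u ∈ Ioo (0:ℝ) t :=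
    Ioo_mem_nhdsLT ht0
  have hev3 : ∀ᶠ u in 𝓝[<] t, (Cg + 1) * (t - u) < ε/2 := by
    have h1 : Tendsto (fun u : ℝ => (Cg + 1) * (t - u)) (𝓝[<] t) (𝓝 0) := by
      have h2 : Tendsto (fun u : ℝ => (Cg + 1) * (t - u)) (𝓝 t) (𝓝 ((Cg + 1) * (t - t))) :=
        (continuous_const.mul (continuous_const.sub continuous_id)).tendsto t
      rw [sub_self, mul_zero] at h2
      exact h2.mono_left nhdsWithin_le_nhds
    exact h1.eventually_lt_const (by linarith)
  obtain ⟨u, hu1, hu2, hu3⟩ := ((hev1.and (hev2.and hev3)).exists)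
  -- split the integral
  have hint1 : IntervalIntegrable (fun r => g (X y r)) volume 0 u := by
    refine ContinuousOn.intervalIntegrable ?_
    rw [uIcc_of_le hu2.1.le]
    exact hIcont.mono (Icc_subset_Icc_right hu2.2.le)
  have hint2 : IntervalIntegrable (fun r => g (X y r)) volume u t := by
    refine ContinuousOn.intervalIntegrable ?_
    rw [uIcc_of_le hu2.2.le]
    exact hIcont.mono (Icc_subset_Icc_left hu2.1.le)
  have hsplit : (∫ s in (0:ℝ)..t, g (X y s)) =
      (∫ s in (0:ℝ)..u, g (X y s)) + ∫ s in u..t, g (X y s) :=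
    (intervalIntegral.integral_add_adjacent_intervals hint1 hint2).symm
  have hbnd : |∫ s in u..t, g (X y s)| ≤ Cg * |t - u| := by
    have := intervalIntegral.norm_integral_le_of_norm_le_const
      (f := fun r => g (X y r)) (a := u) (b := t) (C := Cg)
      (fun x _ => by simpa using hgbd (X y x))
    rwa [Real.norm_eq_abs] at this
  rw [abs_of_nonneg (by linarith [hu2.2] : (0:ℝ) ≤ t - u)] at hbnd
  have hb2 : |∫ s in u..t, g (X y s)| ≤ (Cg + 1) * (t - u) := by nlinarith [hu2.2]
  have habs := (abs_le.1 hb2).2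
  have hfin := haux u hu2
  rw [hsplit]
  linarith
end
end

section
/- Let Ω ⊂ ℝ^N be a nonempty open convex set, d̄(x) := dist(x, Ω̄). For every x ∈ ∂Ω, the set of outward unit normals N_Ω(x) := {n ∈ ℝ^N : |n| = 1 and n·(x − y) ≥ 0 for all y ∈ Ω̄} coincides with the set of limits of gradients of the distance function from outside: N_Ω(x) = {n ∈ ℝ^N : there exists a sequence x_k → x with x_k ∉ Ω̄ and ∇d̄(x_k) → n}. -/
open MeasureTheory Filter Set Metric
open scoped Topology RealInnerProductSpace

noncomputable section

/-- The distance to `closure Ω`. -/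
def dbar {N : ℕ} (Ω : Set (EN N)) (x : EN N) : ℝ := Metric.infDist x (closure Ω)

/-- Lower bound for `infDist`. -/
lemma my_le_infDist {N : ℕ} {K : Set (EN N)} (hne : K.Nonempty) {c : ℝ} {w : EN N}
    (h : ∀ y ∈ K, c ≤ dist w y) : c ≤ Metric.infDist w K := by
  haveI : Nonempty K := hne.to_subtype
  rw [Metric.infDist_eq_iInf]
  exact le_ciInf fun y => h y y.2

/-- The gradient of the distance function to a convex set, at a point outside,
given the projection point. -/
lemma hasGradientAt_infDist {N : ℕ} {K : Set (EN N)} (hne : K.Nonempty)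
    {z p : EN N} (hp : p ∈ K) (hd : Metric.infDist z K = dist z p)
    (hproj : ∀ y ∈ K, ⟪z - p, y - p⟫ ≤ 0) (hzp : z ≠ p) :
    HasGradientAt (fun y => Metric.infDist y K) (‖z - p‖⁻¹ • (z - p)) z := by
  set d : ℝ := ‖z - p‖ with hdd
  have hd0 : 0 < d := by
    simpa [hdd] using sub_ne_zero.mpr hzp
  set v : EN N := d⁻¹ • (z - p) with hv
  have hnv : ‖v‖ = 1 := by
    rw [hv, norm_smul, norm_inv, Real.norm_eq_abs, abs_of_pos hd0]
    field_simp
    exact hdd.symm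
  have hvzp : ⟪v, z - p⟫ = d := by
    rw [hv, real_inner_smul_left, real_inner_self_eq_norm_sq, ← hdd]
    field_simp
  -- lower bound: d + ⟪v, w - z⟫ ≤ infDist w K for all w
  have hlow : ∀ w : EN N, d + ⟪v, w - z⟫ ≤ Metric.infDist w K := by
    intro w
    apply my_le_infDist hne
    intro y hy
    have h1 : ⟪v, w - y⟫ ≤ dist w y := by
      calc ⟪v, w - y⟫ ≤ ‖v‖ * ‖w - y‖ := real_inner_le_norm _ _
        _ = dist w y := by rw [hnv, one_mul, dist_eq_norm]
    have h2 : ⟪v, w - y⟫ = ⟪v, w - z⟫ + ⟪v, z - p⟫ + ⟪v, p - y⟫ := by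
      rw [← inner_add_right, ← inner_add_right]
      congr 1
      abel
    have h3 : 0 ≤ ⟪v, p - y⟫ := by
      have := hproj y hy
      have : d⁻¹ * ⟪z - p, y - p⟫ ≤ 0 :=
        mul_nonpos_of_nonneg_of_nonpos (by positivity) this
      have h4 : ⟪v, y - p⟫ ≤ 0 := by rwa [hv, real_inner_smul_left]
      have h5 : (p : EN N) - y = -(y - p) := by abel
      rw [h5, inner_neg_right]
      linarith
    rw [h2, hvzp] at h1
    linarith
  have hfz : Metric.infDist z K = d := by rw [hd, dist_eq_norm]
  rw [hasGradientAt_iff_hasFDerivAt, hasFDerivAt_iff_isLittleO,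
    Asymptotics.isLittleO_iff]
  intro c hc
  have hball : ∀ᶠ w in 𝓝 z, ‖w - z‖ < min (d / 2) (c * d) := by
    have hmem : Metric.ball z (min (d / 2) (c * d)) ∈ 𝓝 z :=
      Metric.ball_mem_nhds z (lt_min (by positivity) (by positivity))
    filter_upwards [hmem] with w hw
    simpa [dist_eq_norm] using hw
  filter_upwards [hball] with w hw
  have hw1 : ‖w - z‖ < d / 2 := lt_of_lt_of_le hw (min_le_left _ _)
  have hw2 : ‖w - z‖ < c * d := lt_of_lt_of_le hw (min_le_right _ _)
  set r : ℝ := ‖w - z‖ with hrr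
  set t : ℝ := d + ⟪v, w - z⟫ with ht
  -- |⟪v, w - z⟫| ≤ r
  have habs : |⟪v, w - z⟫| ≤ r := by
    rw [abs_le]
    constructor
    · have := real_inner_le_norm v (z - w)
      rw [hnv, one_mul] at this
      have h5 : ⟪v, z - w⟫ = -⟪v, w - z⟫ := by
        rw [show (z : EN N) - w = -(w - z) by abel, inner_neg_right]
      rw [h5] at this
      have : ‖z - w‖ = r := by rw [hrr, norm_sub_rev]
      linarith [real_inner_le_norm v (z - w), this]
    · have := real_inner_le_norm v (w - z)
      rw [hnv, one_mul] at this
      exact this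
  -- upper bound
  have hupper : Metric.infDist w K ≤ t + r ^ 2 / d := by
    have h6 : Metric.infDist w K ≤ ‖w - p‖ := by
      rw [← dist_eq_norm]; exact Metric.infDist_le_dist_of_mem hp
    set s : EN N := w - p with hs
    have hsplit : (w : EN N) - p = (z - p) + (w - z) := by abel
    have hsq : ‖w - p‖ ^ 2 = d ^ 2 + 2 * (d * ⟪v, w - z⟫) + r ^ 2 := by
      rw [hsplit, norm_add_sq_real, ← hdd, ← hrr]
      congr 2
      have : ⟪z - p, w - z⟫ = d * ⟪v, w - z⟫ := by
        rw [hv, real_inner_smul_left]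
        field_simp
      rw [this]
    -- s² ≤ t² + r²
    have hsq2 : ‖w - p‖ ^ 2 ≤ t ^ 2 + r ^ 2 := by
      rw [hsq, ht]; nlinarith [sq_nonneg (⟪v, w - z⟫)]
    have htpos : d / 2 < t := by
      have : -r ≤ ⟪v, w - z⟫ := neg_le_of_abs_le habs
      rw [ht]; linarith
    have hfin : ‖w - p‖ ≤ t + r ^ 2 / d := by
      rcases le_or_gt ‖w - p‖ t with h | h
      · have : 0 ≤ r ^ 2 / d := by positivity
        linarith
      · have hst : d < ‖w - p‖ + t := by linarith
        have hst' : (0:ℝ) < ‖w - p‖ - t := by linarith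
        have h8 : (‖w - p‖ - t) * d ≤ r ^ 2 := by
          calc (‖w - p‖ - t) * d ≤ (‖w - p‖ - t) * (‖w - p‖ + t) :=
                mul_le_mul_of_nonneg_left (le_of_lt hst) (le_of_lt hst')
            _ = ‖w - p‖ ^ 2 - t ^ 2 := by ring
            _ ≤ r ^ 2 := by linarith
        have h9 : ‖w - p‖ - t ≤ r ^ 2 / d := (le_div_iff₀ hd0).mpr h8
        linarith
    linarith
  have hlow' := hlow w
  rw [hfz]
  have hgoal : |Metric.infDist w K - d - ⟪v, w - z⟫| ≤ c * r := by
    have hr0 : (0:ℝ) ≤ r := norm_nonneg _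
    have hcr : (0:ℝ) ≤ c * r := mul_nonneg hc.le hr0
    rw [abs_le]
    constructor
    · linarith
    · have h9 : r ^ 2 / d ≤ c * r := by
        rw [div_le_iff₀ hd0, hrr]
        have : r * r ≤ (c * d) * r := by
          apply mul_le_mul_of_nonneg_right (le_of_lt hw2) (norm_nonneg _)
        nlinarith [norm_nonneg (w - z)]
      linarith
    -- ⟪v, w - z⟫ handled
  calc ‖Metric.infDist w K - d - (InnerProductSpace.toDual ℝ (EN N) v) (w - z)‖
      = |Metric.infDist w K - d - ⟪v, w - z⟫| := by
        rw [InnerProductSpace.toDual_apply_apply, Real.norm_eq_abs]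
    _ ≤ c * r := hgoal
    _ = c * ‖w - z‖ := by rw [hrr]

/-- Projection onto a nonempty closed convex set: existence and variational inequality. -/
lemma exists_proj {N : ℕ} {K : Set (EN N)} (hconv : Convex ℝ K) (hcl : IsClosed K)
    (hne : K.Nonempty) (z : EN N) :
    ∃ p ∈ K, Metric.infDist z K = dist z p ∧ ∀ y ∈ K, ⟪z - p, y - p⟫ ≤ 0 := by
  obtain ⟨p, hp, hdist⟩ := hcl.exists_infDist_eq_dist hne z
  refine ⟨p, hp, hdist, ?_⟩
  rw [← norm_eq_iInf_iff_real_inner_le_zero hconv hp]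
  haveI : Nonempty K := hne.to_subtype
  rw [← dist_eq_norm, ← hdist, Metric.infDist_eq_iInf]
  simp only [dist_eq_norm]

/-- Let `Ω ⊆ ℝ^N` be a nonempty open convex set.  For every boundary
point `x ∈ ∂Ω`, the set of outward unit normals
`N_Ω(x) = {n : |n| = 1, n·(x − y) ≥ 0 ∀ y ∈ Ω̄}` coincides with the set of limits of
gradients of the distance function `d̄ = dist(·, Ω̄)` taken from outside `Ω̄`. -/
theorem normal_cone_eq_gradient_limits
    {N : ℕ} (hN : 1 ≤ N)
    (Ω : Set (EN N)) (hΩne : Ω.Nonempty) (hΩopen : IsOpen Ω) (hΩconv : Convex ℝ Ω)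
    (x : EN N) (hx : x ∈ frontier Ω) :
    {n : EN N | ‖n‖ = 1 ∧ ∀ y ∈ closure Ω, 0 ≤ ⟪n, x - y⟫} =
    {n : EN N | ∃ xk : ℕ → EN N, (∀ k, xk k ∉ closure Ω) ∧
      Tendsto xk atTop (𝓝 x) ∧
      Tendsto (fun k => gradient (dbar Ω) (xk k)) atTop (𝓝 n)} := by
  set K : Set (EN N) := closure Ω with hK
  have hKconv : Convex ℝ K := hΩconv.closure
  have hKcl : IsClosed K := isClosed_closure
  have hKne : K.Nonempty := hΩne.closure
  have hxK : x ∈ K := frontier_subset_closure hx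
  ext n
  simp only [Set.mem_setOf_eq]
  constructor
  · rintro ⟨hn1, hn2⟩
    set xk : ℕ → EN N := fun k => x + ((k : ℝ) + 1)⁻¹ • n with hxk
    have htk : ∀ k : ℕ, (0 : ℝ) < ((k : ℝ) + 1)⁻¹ := fun k => by positivity
    have hout : ∀ k, xk k ∉ K := by
      intro k hk
      have := hn2 (xk k) hk
      have hcomp : ⟪n, x - xk k⟫ = -((k : ℝ) + 1)⁻¹ * ‖n‖ ^ 2 := by
        rw [hxk]
        simp only [add_sub_cancel_left]
        rw [show x - (x + ((k:ℝ)+1)⁻¹ • n) = -(((k:ℝ)+1)⁻¹ • n) by abel,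
          inner_neg_right, real_inner_smul_right, real_inner_self_eq_norm_sq]
        ring
      rw [hcomp, hn1] at this
      nlinarith [htk k]
    refine ⟨xk, hout, ?_, ?_⟩
    · have h1 : Tendsto (fun k : ℕ => ((k : ℝ) + 1)⁻¹) atTop (𝓝 0) := by
        simpa using tendsto_one_div_add_atTop_nhds_zero_nat (𝕜 := ℝ)
      have h2 : Tendsto (fun k : ℕ => ((k : ℝ) + 1)⁻¹ • n) atTop (𝓝 ((0 : ℝ) • n)) :=
        h1.smul_const n
      rw [zero_smul] at h2
      simpa using tendsto_const_nhds.add h2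
    · -- gradient is constantly n
      have hgrad : ∀ k, gradient (dbar Ω) (xk k) = n := by
        intro k
        set t : ℝ := ((k : ℝ) + 1)⁻¹ with htt
        have htpos : (0 : ℝ) < t := htk k
        have hsub : xk k - x = t • n := by
          rw [hxk, htt]; exact add_sub_cancel_left x _
        have hne0 : xk k ≠ x := by
          intro h
          rw [h] at hsub
          have : t • n = 0 := by rw [← hsub]; abel
          rcases smul_eq_zero.mp this with h' | h'
          · exact absurd h' (ne_of_gt htpos)
          · rw [h'] at hn1; simp at hn1
        have hdist : Metric.infDist (xk k) K = dist (xk k) x := by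
          apply le_antisymm (Metric.infDist_le_dist_of_mem hxK)
          apply my_le_infDist hKne
          intro y hy
          have h1 : ⟪n, xk k - y⟫ ≤ dist (xk k) y := by
            calc ⟪n, xk k - y⟫ ≤ ‖n‖ * ‖xk k - y‖ := real_inner_le_norm _ _
              _ = dist (xk k) y := by rw [hn1, one_mul, dist_eq_norm]
          have h2 : ⟪n, xk k - y⟫ = ⟪n, xk k - x⟫ + ⟪n, x - y⟫ := by
            rw [← inner_add_right]; congr 1; abel
          have h3 : ⟪n, xk k - x⟫ = t := by
            rw [hsub, real_inner_smul_right, real_inner_self_eq_norm_sq, hn1]; ring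
          have h4 : dist (xk k) x = t := by
            rw [dist_eq_norm, hsub, norm_smul, hn1, Real.norm_eq_abs,
              abs_of_pos htpos, mul_one]
          rw [h4]
          have := hn2 y hy
          linarith [h2 ▸ h1, h3]
        have hproj : ∀ y ∈ K, ⟪xk k - x, y - x⟫ ≤ 0 := by
          intro y hy
          rw [hsub, real_inner_smul_left]
          have h5 : ⟪n, y - x⟫ = -⟪n, x - y⟫ := by
            rw [show (y : EN N) - x = -(x - y) by abel, inner_neg_right]
          rw [h5]
          have := hn2 y hy
          nlinarith
        have hg := hasGradientAt_infDist hKne hxK hdist hproj hne0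
        have hvec : ‖xk k - x‖⁻¹ • (xk k - x) = n := by
          rw [hsub, norm_smul, hn1, Real.norm_eq_abs, abs_of_pos htpos, mul_one,
            smul_smul, inv_mul_cancel₀ (ne_of_gt htpos), one_smul]
        rw [hvec] at hg
        exact hg.gradient
      simp only [hgrad]
      exact tendsto_const_nhds
  · rintro ⟨xk, hout, hlim, hglim⟩
    -- projections
    have hproj : ∀ k, ∃ p ∈ K, Metric.infDist (xk k) K = dist (xk k) p ∧
        ∀ y ∈ K, ⟪xk k - p, y - p⟫ ≤ 0 := fun k => exists_proj hKconv hKcl hKne (xk k)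
    choose p hpK hpd hpineq using hproj
    have hne0 : ∀ k, xk k ≠ p k := by
      intro k h
      exact hout k (h ▸ hpK k)
    set g : ℕ → EN N := fun k => ‖xk k - p k‖⁻¹ • (xk k - p k) with hg
    have hgrad : ∀ k, gradient (dbar Ω) (xk k) = g k := fun k =>
      (hasGradientAt_infDist hKne (hpK k) (hpd k) (hpineq k) (hne0 k)).gradient
    have hglim' : Tendsto g atTop (𝓝 n) := by
      have : (fun k => gradient (dbar Ω) (xk k)) = g := funext hgrad
      rwa [this] at hglim
    have hng : ∀ k, ‖g k‖ = 1 := by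
      intro k
      have h0 : (0 : ℝ) < ‖xk k - p k‖ := by
        simpa using sub_ne_zero.mpr (hne0 k)
      rw [hg]
      simp only [norm_smul, norm_inv, Real.norm_eq_abs, abs_of_pos h0]
      field_simp
    have hn1 : ‖n‖ = 1 := by
      have h1 : Tendsto (fun k => ‖g k‖) atTop (𝓝 ‖n‖) := hglim'.norm
      have h2 : Tendsto (fun k => ‖g k‖) atTop (𝓝 1) := by
        simpa [hng] using tendsto_const_nhds (α := ℝ) (f := atTop (α := ℕ)) (a := 1)
      exact tendsto_nhds_unique h1 h2
    -- p k → x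
    have hplim : Tendsto p atTop (𝓝 x) := by
      rw [tendsto_iff_dist_tendsto_zero]
      have hle : ∀ k, dist (p k) x ≤ 2 * dist (xk k) x := by
        intro k
        have h1 : dist (p k) x ≤ dist (p k) (xk k) + dist (xk k) x := dist_triangle _ _ _
        have h2 : dist (p k) (xk k) = Metric.infDist (xk k) K := by
          rw [hpd k, dist_comm]
        have h3 : Metric.infDist (xk k) K ≤ dist (xk k) x :=
          Metric.infDist_le_dist_of_mem hxK
        linarith
      have hxd : Tendsto (fun k => dist (xk k) x) atTop (𝓝 0) := by
        rw [← tendsto_iff_dist_tendsto_zero]; exact hlim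
      have h2d : Tendsto (fun k => 2 * dist (xk k) x) atTop (𝓝 0) := by
        simpa using hxd.const_mul 2
      exact squeeze_zero (fun k => dist_nonneg) hle h2d
    refine ⟨hn1, ?_⟩
    intro y hy
    have hineq : ∀ k, 0 ≤ ⟪g k, p k - y⟫ := by
      intro k
      have h0 : (0 : ℝ) < ‖xk k - p k‖ := by
        simpa using sub_ne_zero.mpr (hne0 k)
      rw [hg]
      simp only
      rw [real_inner_smul_left]
      apply mul_nonneg (by positivity)
      have := hpineq k y hy
      have h5 : ⟪xk k - p k, p k - y⟫ = -⟪xk k - p k, y - p k⟫ := by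
        rw [show (p k : EN N) - y = -(y - p k) by abel, inner_neg_right]
      rw [h5]; linarith
    have htend : Tendsto (fun k => ⟪g k, p k - y⟫) atTop (𝓝 ⟪n, x - y⟫) := by
      exact hglim'.inner (hplim.sub tendsto_const_nhds)
    exact ge_of_tendsto htend (Eventually.of_forall hineq)
end
end

section
/- Let Ω ⊂ ℝ^N be a nonempty open convex set, d̄ := dist(·, Ω̄), and d̃ := min(d̄, 1). Define the vector field V : ℝ^N → ℝ^N by V(x) := d̃(x)·∇d̄(x) for x ∉ Ω̄ and V(x) := 0 for x ∈ Ω̄. Then V is continuous on ℝ^N and satisfies the one-sided Lipschitz condition: there is a constant K ≥ 0 such that (V(x) − V(y))·(x − y) ≥ −K|x − y|² for all x, y ∈ ℝ^N. -/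
open MeasureTheory Filter Set Metric
open scoped Topology RealInnerProductSpace

noncomputable section

/-- The truncated distance `d̃ = min(d̄, 1)`. -/
def dtil {N : ℕ} (Ω : Set (EN N)) (x : EN N) : ℝ := min (dbar Ω x) 1

/-- The penalization vector field `V(x) = d̃(x) ∇d̄(x)` for `x ∉ closure Ω`, extended by
`0` on `closure Ω`. -/
def Vfield {N : ℕ} (Ω : Set (EN N)) : EN N → EN N :=
  ((closure Ω)ᶜ).indicator fun x => dtil Ω x • gradient (dbar Ω) x

/-- Let `Ω ⊆ ℝ^N` be a nonempty open convex set.  The vector field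
`V(x) = d̃(x) ∇d̄(x)` (extended by `0` on `Ω̄`) is continuous on `ℝ^N` and satisfies the
one-sided Lipschitz condition `(V(x) − V(y))·(x − y) ≥ −K|x − y|²` for some `K ≥ 0`. -/
theorem penalization_field_onesided_Lipschitz
    {N : ℕ} (hN : 1 ≤ N)
    (Ω : Set (EN N)) (hΩne : Ω.Nonempty) (hΩopen : IsOpen Ω) (hΩconv : Convex ℝ Ω) :
    Continuous (Vfield Ω) ∧
    ∃ K : ℝ, 0 ≤ K ∧ ∀ x y : EN N,
      -(K * ‖x - y‖ ^ 2) ≤ ⟪Vfield Ω x - Vfield Ω y, x - y⟫ := by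
  set C := closure Ω with hCdef
  have hCcl : IsClosed C := isClosed_closure
  have hCne : C.Nonempty := hΩne.closure
  have hCconv : Convex ℝ C := hΩconv.closure
  have hdbar_nonneg : ∀ x, 0 ≤ dbar Ω x := fun x => infDist_nonneg
  have hdbar_cont : Continuous (dbar Ω) := by
    unfold dbar
    exact continuous_infDist_pt _
  have hdbar_zero : ∀ x ∈ C, dbar Ω x = 0 := fun x hx => infDist_zero_of_mem hx
  have hdbar_pos : ∀ x ∉ C, 0 < dbar Ω x := fun x hx =>
    (hCcl.notMem_iff_infDist_pos hCne).mp hx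
  have hdtil_cont : Continuous (dtil Ω) := hdbar_cont.min continuous_const
  have hdtil_nonneg : ∀ x, 0 ≤ dtil Ω x := fun x => le_min (hdbar_nonneg x) one_pos.le
  -- the metric projection onto C
  have hproj : ∀ x : EN N, ∃ p, p ∈ C ∧ ‖x - p‖ = dbar Ω x ∧
      ∀ w ∈ C, ⟪x - p, w - p⟫ ≤ 0 := by
    intro x
    obtain ⟨p, hp, hd⟩ := hCcl.exists_infDist_eq_dist hCne x
    have hnorm : ‖x - p‖ = dbar Ω x := by rw [dbar, hd, dist_eq_norm]
    refine ⟨p, hp, hnorm, ?_⟩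
    have hiInf : ‖x - p‖ = ⨅ w : C, ‖x - w‖ := by
      rw [hnorm, dbar, infDist_eq_iInf]
      simp_rw [dist_eq_norm]
      rfl
    exact (norm_eq_iInf_iff_real_inner_le_zero hCconv hp).mp hiInf
  choose P hPmem hPdist hPinner using hproj
  -- the projection is 1-Lipschitz
  have hPlip : ∀ x y, ‖P x - P y‖ ≤ ‖x - y‖ := by
    intro x y
    have h1 : ⟪x - P x, P y - P x⟫ ≤ 0 := hPinner x (P y) (hPmem y)
    have h2 : ⟪y - P y, P x - P y⟫ ≤ 0 := hPinner y (P x) (hPmem x)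
    have decomp : ⟪x - y, P x - P y⟫ =
        ⟪x - P x, P x - P y⟫ + ⟪P x - P y, P x - P y⟫ + ⟪P y - y, P x - P y⟫ := by
      rw [← inner_add_left, ← inner_add_left]; congr 1; abel
    have e1 : ⟪x - P x, P x - P y⟫ = -⟪x - P x, P y - P x⟫ := by
      rw [← inner_neg_right]; congr 1; abel
    have e2 : ⟪P y - y, P x - P y⟫ = -⟪y - P y, P x - P y⟫ := by
      rw [← inner_neg_left]; congr 1; abel
    have key : ‖P x - P y‖ ^ 2 ≤ ⟪x - y, P x - P y⟫ := by
      rw [decomp, e1, e2, real_inner_self_eq_norm_sq]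
      linarith
    have hcs : ⟪x - y, P x - P y⟫ ≤ ‖x - y‖ * ‖P x - P y‖ := real_inner_le_norm _ _
    rcases eq_or_lt_of_le (norm_nonneg (P x - P y)) with h0 | h0
    · rw [← h0]; exact norm_nonneg _
    · have : ‖P x - P y‖ * ‖P x - P y‖ ≤ ‖x - y‖ * ‖P x - P y‖ := by
        nlinarith [key, hcs]
      exact le_of_mul_le_mul_right this h0
  have hPcont : Continuous P := by
    refine (LipschitzWith.of_dist_le_mul (K := 1) ?_).continuous
    intro x y
    rw [dist_eq_norm, dist_eq_norm, NNReal.coe_one, one_mul]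
    exact hPlip x y
  -- subgradient inequality
  have hsub0 : ∀ x ∉ C, ∀ z, ⟪x - P x, z - x⟫ ≤ dbar Ω x * dbar Ω z - dbar Ω x ^ 2 := by
    intro x hx z
    have decomp : ⟪x - P x, z - x⟫ =
        ⟪x - P x, z - P z⟫ + ⟪x - P x, P z - P x⟫ + ⟪x - P x, P x - x⟫ := by
      rw [← inner_add_right, ← inner_add_right]; congr 1; abel
    have t1 : ⟪x - P x, z - P z⟫ ≤ dbar Ω x * dbar Ω z := by
      calc ⟪x - P x, z - P z⟫ ≤ ‖x - P x‖ * ‖z - P z‖ := real_inner_le_norm _ _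
        _ = dbar Ω x * dbar Ω z := by rw [hPdist, hPdist]
    have t2 : ⟪x - P x, P z - P x⟫ ≤ 0 := hPinner x (P z) (hPmem z)
    have t3 : ⟪x - P x, P x - x⟫ = -(dbar Ω x ^ 2) := by
      rw [show P x - x = -(x - P x) by abel, inner_neg_right,
        real_inner_self_eq_norm_sq, hPdist]
    rw [decomp, t3]
    linarith
  have hsub : ∀ x ∉ C, ∀ z,
      ⟪(dbar Ω x)⁻¹ • (x - P x), z - x⟫ ≤ dbar Ω z - dbar Ω x := by
    intro x hx z
    have hd := hdbar_pos x hx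
    rw [real_inner_smul_left]
    have h0 := hsub0 x hx z
    have h1 : (dbar Ω x)⁻¹ * ⟪x - P x, z - x⟫ ≤
        (dbar Ω x)⁻¹ * (dbar Ω x * dbar Ω z - dbar Ω x ^ 2) :=
      mul_le_mul_of_nonneg_left h0 (by positivity)
    have heq : (dbar Ω x)⁻¹ * (dbar Ω x * dbar Ω z - dbar Ω x ^ 2)
        = dbar Ω z - dbar Ω x := by
      field_simp
    linarith
  -- the gradient of dbar outside C
  have hgrad : ∀ x ∉ C, HasGradientAt (dbar Ω) ((dbar Ω x)⁻¹ • (x - P x)) x := by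
    intro x hx
    have hd := hdbar_pos x hx
    have hdx : ‖x - P x‖ = dbar Ω x := hPdist x
    have hne : ‖x - P x‖ ^ 2 ≠ 0 := by rw [hdx]; positivity
    have hq : HasFDerivAt (fun y : EN N => ‖y - P x‖ ^ 2)
        (2 • (innerSL ℝ (x - P x))) x := by
      have h := ((hasFDerivAt_id x).sub_const (P x)).norm_sq
      simpa using h
    have hg := hq.sqrt hne
    simp only [Real.sqrt_sq (norm_nonneg _)] at hg
    have hLval : ∀ h : EN N,
        ((1 / (2 * ‖x - P x‖)) • (2 • (innerSL ℝ (x - P x)))) h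
          = ⟪(dbar Ω x)⁻¹ • (x - P x), h⟫ := by
      intro h
      simp only [ContinuousLinearMap.smul_apply, innerSL_apply_apply, real_inner_smul_left]
      rw [← hdx]
      have hn : ‖x - P x‖ ≠ 0 := by rw [hdx]; exact hd.ne'
      field_simp
      simp only [smul_eq_mul, nsmul_eq_mul, Nat.cast_ofNat]
      field_simp
    have hgu : HasGradientAt (fun y : EN N => ‖y - P x‖)
        ((dbar Ω x)⁻¹ • (x - P x)) x := by
      rw [hasGradientAt_iff_hasFDerivAt]
      have hext : (InnerProductSpace.toDual ℝ (EN N)) ((dbar Ω x)⁻¹ • (x - P x))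
          = (1 / (2 * ‖x - P x‖)) • (2 • (innerSL ℝ (x - P x))) := by
        refine ContinuousLinearMap.ext fun h => ?_
        rw [InnerProductSpace.toDual_apply_apply]
        exact (hLval h).symm
      rw [hext]
      exact hg
    rw [hasGradientAt_iff_isLittleO] at hgu
    rw [hasGradientAt_iff_isLittleO]
    refine (Asymptotics.isBigO_of_le _ ?_).trans_isLittleO hgu
    intro y
    have hy1 : 0 ≤ dbar Ω y - dbar Ω x - ⟪(dbar Ω x)⁻¹ • (x - P x), y - x⟫ := by
      have := hsub x hx y
      linarith
    have hy2 : dbar Ω y - dbar Ω x - ⟪(dbar Ω x)⁻¹ • (x - P x), y - x⟫ ≤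
        ‖y - P x‖ - ‖x - P x‖ - ⟪(dbar Ω x)⁻¹ • (x - P x), y - x⟫ := by
      have hub : dbar Ω y ≤ ‖y - P x‖ := by
        have := infDist_le_dist_of_mem (x := y) (hPmem x)
        rwa [dist_eq_norm] at this
      rw [hdx]
      linarith
    rw [Real.norm_eq_abs, Real.norm_eq_abs, abs_of_nonneg hy1,
      abs_of_nonneg (le_trans hy1 hy2)]
    exact hy2
  -- formulas for V
  have hV_out : ∀ x ∉ C, Vfield Ω x = dtil Ω x • ((dbar Ω x)⁻¹ • (x - P x)) := by
    intro x hx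
    rw [Vfield, indicator_of_mem (show x ∈ Cᶜ from hx), (hgrad x hx).gradient]
  have hV_in : ∀ x ∈ C, Vfield Ω x = 0 := by
    intro x hx
    rw [Vfield, indicator_of_notMem (by simpa using hx)]
  have hVbound : ∀ x, ‖Vfield Ω x‖ ≤ dbar Ω x := by
    intro x
    by_cases hx : x ∈ C
    · rw [hV_in x hx]; simpa using hdbar_nonneg x
    · have hd := hdbar_pos x hx
      rw [hV_out x hx, norm_smul, norm_smul, hPdist, Real.norm_eq_abs,
        Real.norm_eq_abs, abs_of_nonneg (hdtil_nonneg x), abs_of_nonneg (by positivity)]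
      rw [inv_mul_cancel₀ hd.ne', mul_one]
      exact min_le_left _ _
  -- continuity
  have hcont : Continuous (Vfield Ω) := by
    rw [continuous_iff_continuousAt]
    intro x
    by_cases hx : x ∈ C
    · rw [ContinuousAt, hV_in x hx]
      apply squeeze_zero_norm hVbound
      have h := hdbar_cont.continuousAt (x := x)
      rwa [ContinuousAt, hdbar_zero x hx] at h
    · have hd := hdbar_pos x hx
      have hrhs : ContinuousAt (fun y => dtil Ω y • ((dbar Ω y)⁻¹ • (y - P y))) x := by
        exact (hdtil_cont.continuousAt).smul
          (((hdbar_cont.continuousAt).inv₀ hd.ne').smul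
            ((continuous_id.sub hPcont).continuousAt))
      refine hrhs.congr ?_
      filter_upwards [hCcl.isOpen_compl.mem_nhds hx] with y hy
      exact (hV_out y hy).symm
  refine ⟨hcont, 0, le_refl 0, ?_⟩
  intro x y
  have hkey : ∀ a b : EN N, dtil Ω a * (dbar Ω a - dbar Ω b) ≤ ⟪Vfield Ω a, a - b⟫ := by
    intro a b
    by_cases ha : a ∈ C
    · rw [hV_in a ha, inner_zero_left, hdbar_zero a ha]
      have hz : dtil Ω a = 0 := by rw [dtil, hdbar_zero a ha]; simp
      rw [hz, zero_mul]
    · rw [hV_out a ha, real_inner_smul_left]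
      have h := hsub a ha b
      have h' : dbar Ω a - dbar Ω b ≤ ⟪(dbar Ω a)⁻¹ • (a - P a), a - b⟫ := by
        have e : ⟪(dbar Ω a)⁻¹ • (a - P a), a - b⟫
            = -⟪(dbar Ω a)⁻¹ • (a - P a), b - a⟫ := by
          rw [← inner_neg_right]; congr 1; abel
        rw [e]; linarith
      exact mul_le_mul_of_nonneg_left h' (hdtil_nonneg a)
  have h1 := hkey x y
  have h2 := hkey y x
  have hmin : 0 ≤ (dtil Ω x - dtil Ω y) * (dbar Ω x - dbar Ω y) := by
    rcases le_total (dbar Ω x) (dbar Ω y) with h | h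
    · have hm : dtil Ω x ≤ dtil Ω y := min_le_min h le_rfl
      nlinarith
    · have hm : dtil Ω y ≤ dtil Ω x := min_le_min h le_rfl
      nlinarith
  have hsplit : ⟪Vfield Ω x - Vfield Ω y, x - y⟫
      = ⟪Vfield Ω x, x - y⟫ + ⟪Vfield Ω y, y - x⟫ := by
    rw [inner_sub_left]
    have e : ⟪Vfield Ω y, x - y⟫ = -⟪Vfield Ω y, y - x⟫ := by
      rw [← inner_neg_right]; congr 1; abel
    rw [e]; ring
  have hring : dtil Ω x * (dbar Ω x - dbar Ω y) + dtil Ω y * (dbar Ω y - dbar Ω x)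
      = (dtil Ω x - dtil Ω y) * (dbar Ω x - dbar Ω y) := by ring
  rw [hsplit]
  simp only [zero_mul, neg_zero]
  linarith
end
end
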